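/- arXiv:math/0006176 — 4 statements merged into one kernel-verified Lean document; each statement's English description precedes it below -/
import Mathlib

section
/- For every odd characteristic a and every τ ∈ ℌ_g, one has ∑_{b∈𝔎₊} (−1)^{a′ᵀb″} θ_{a+b}(τ)² θ_b(τ)² = 0. -/
open Complex BigOperators Finset

noncomputable section

/-- The Siegel upper half space of degree `g`: complex symmetric `g × g` matrices
whose imaginary part is positive definite. -/
def SiegelHalf (g : ℕ) : Set (Matrix (Fin g) (Fin g) ℂ) :=
  {τ | τ.IsSymm ∧ (Matrix.of fun i j => (τ i j).im).PosDef}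

/-- A theta characteristic `a = (a′, a″)` with `a′, a″ ∈ {0,1}^g`. -/
abbrev ThetaChar (g : ℕ) := (Fin g → Fin 2) × (Fin g → Fin 2)

/-- Componentwise sum of characteristics, modulo 2. -/
def charAdd {g : ℕ} (a b : ThetaChar g) : ThetaChar g := (a.1 + b.1, a.2 + b.2)

/-- `|a| = a′ᵀ a″`. -/
def charAbs {g : ℕ} (a : ThetaChar g) : ℕ := ∑ i, (a.1 i).val * (a.2 i).val

/-- A characteristic is even if `|a|` is even. -/
def IsEvenChar {g : ℕ} (a : ThetaChar g) : Prop := Even (charAbs a)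

instance {g : ℕ} : DecidablePred (IsEvenChar (g := g)) := fun a =>
  decidable_of_iff (charAbs a % 2 = 0) Nat.even_iff.symm

/-- `⟨a,b⟩ = a′ᵀ b″ − b′ᵀ a″`. -/
def charPair {g : ℕ} (a b : ThetaChar g) : ℤ :=
  (∑ i, ((a.1 i).val : ℤ) * ((b.2 i).val : ℤ))
    - ∑ i, ((b.1 i).val : ℤ) * ((a.2 i).val : ℤ)

/-- The vector `n + a′/2 ∈ ℂ^g`. -/
def thetaVec {g : ℕ} (a : ThetaChar g) (n : Fin g → ℤ) (i : Fin g) : ℂ :=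
  (n i : ℂ) + ((a.1 i).val : ℂ) / 2

/-- The `n`-th term of the theta series with characteristic `a`. -/
def thetaTerm {g : ℕ} (a : ThetaChar g) (z : Fin g → ℂ)
    (τ : Matrix (Fin g) (Fin g) ℂ) (n : Fin g → ℤ) : ℂ :=
  Complex.exp ((Real.pi : ℂ) * Complex.I *
      (∑ i, ∑ j, thetaVec a n i * τ i j * thetaVec a n j)
    + 2 * (Real.pi : ℂ) * Complex.I *
      (∑ i, thetaVec a n i * (z i + ((a.2 i).val : ℂ) / 2)))

/-- The theta function `θ_a(z, τ)`. -/
def Theta {g : ℕ} (a : ThetaChar g) (z : Fin g → ℂ)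
    (τ : Matrix (Fin g) (Fin g) ℂ) : ℂ :=
  ∑' n : Fin g → ℤ, thetaTerm a z τ n

/-- The thetanull `θ_a(τ) = θ_a(0, τ)`. -/
def Thetanull {g : ℕ} (a : ThetaChar g) (τ : Matrix (Fin g) (Fin g) ℂ) : ℂ :=
  Theta a 0 τ

/-- The derivation `δ_{jl}` acting on functions of `τ ∈ ℌ_g`. -/
def delta {g : ℕ} (j l : Fin g) (f : Matrix (Fin g) (Fin g) ℂ → ℂ)
    (τ : Matrix (Fin g) (Fin g) ℂ) : ℂ :=
  if j = l then
    (1 / ((Real.pi : ℂ) * Complex.I)) *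
      deriv (fun t : ℂ => f (τ + t • Matrix.single j j 1)) 0
  else
    (1 / (2 * (Real.pi : ℂ) * Complex.I)) *
      deriv (fun t : ℂ =>
        f (τ + t • (Matrix.single j l 1 + Matrix.single l j 1))) 0

/-- `ψ_{a,jl} = δ_{jl} θ_a / θ_a`. -/
def psi {g : ℕ} (a : ThetaChar g) (j l : Fin g)
    (τ : Matrix (Fin g) (Fin g) ℂ) : ℂ :=
  delta j l (Thetanull a) τ / Thetanull a τ

/-- The quadratic form `ψ_a(u) = ∑_{j,l} ψ_{a,jl} u_j u_l`. -/
def psiQuad {g : ℕ} (a : ThetaChar g) (u : Fin g → ℂ)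
    (τ : Matrix (Fin g) (Fin g) ℂ) : ℂ :=
  ∑ j, ∑ l, psi a j l τ * u j * u l

/-- `∂θ_a/∂z_j (0, τ)`. -/
def thetaZDeriv {g : ℕ} (a : ThetaChar g) (j : Fin g)
    (τ : Matrix (Fin g) (Fin g) ℂ) : ℂ :=
  deriv (fun t : ℂ => Theta a (fun i => if i = j then t else 0) τ) 0


/-! ### Auxiliary lemmas -/

lemma fin2_add_add (x y : Fin 2) : x + (x + y) = y := by revert x y; decide

lemma charAdd_charAdd {g : ℕ} (a b : ThetaChar g) : charAdd a (charAdd a b) = b := by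
  unfold charAdd
  refine Prod.ext ?_ ?_ <;> funext i <;>
    simp only [Pi.add_apply, fin2_add_add]

lemma exponent_parity {g : ℕ} (a b : ThetaChar g) (ha : Odd (charAbs a)) :
    Odd ((∑ i, (a.1 i).val * (b.2 i).val)
      + ∑ i, (a.1 i).val * (((charAdd a b).2) i).val) := by
  have key : ∀ x y z : Fin 2,
      (x.val * y.val + x.val * ((z + y).val)) % 2 = (x.val * z.val) % 2 := by decide
  rw [Nat.odd_iff, ← Finset.sum_add_distrib, Finset.sum_nat_mod]
  have h : ∀ i ∈ Finset.univ,
      ((a.1 i).val * (b.2 i).val + (a.1 i).val * (((charAdd a b).2) i).val) % 2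
        = ((a.1 i).val * (a.2 i).val) % 2 := by
    intro i _
    have hc : ((charAdd a b).2) i = a.2 i + b.2 i := rfl
    rw [hc]
    exact key _ _ _
  rw [Finset.sum_congr rfl h, ← Finset.sum_nat_mod]
  exact Nat.odd_iff.mp ha

lemma neg_one_pow_eq_neg {m n : ℕ} (h : Odd (m + n)) : ((-1 : ℂ)) ^ m = -(-1 : ℂ) ^ n := by
  rcases Nat.even_or_odd m with hm | hm <;> rcases Nat.even_or_odd n with hn | hn
  · exact absurd (hm.add hn) (Nat.not_even_iff_odd.mpr h)
  · simp [hm.neg_one_pow, hn.neg_one_pow]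
  · simp [hm.neg_one_pow, hn.neg_one_pow]
  · exfalso
    rw [Nat.odd_iff] at hm hn
    rw [Nat.odd_iff] at h
    omega

lemma exp_int_pi (m : ℤ) (hm : Odd m) :
    Complex.exp ((m : ℂ) * ((Real.pi : ℂ) * Complex.I)) = -1 := by
  rw [Complex.exp_int_mul, Complex.exp_pi_mul_I]
  exact hm.neg_one_zpow

lemma thetaTerm_negShift {g : ℕ} (b : ThetaChar g) (τ : Matrix (Fin g) (Fin g) ℂ)
    (hb : Odd (charAbs b)) (n : Fin g → ℤ) :
    thetaTerm b 0 τ (fun i => -(n i) - ((b.1 i).val : ℤ)) = - thetaTerm b 0 τ n := by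
  have hv : ∀ i, thetaVec b (fun i => -(n i) - ((b.1 i).val : ℤ)) i = - thetaVec b n i := by
    intro i; unfold thetaVec; push_cast; ring
  unfold thetaTerm
  simp only [hv, Pi.zero_apply]
  set v := thetaVec b n with hvdef
  set L := ∑ i, v i * ((0 : ℂ) + ((b.2 i).val : ℂ) / 2) with hLdef
  set M : ℤ := ∑ i, (2 * n i * ((b.2 i).val : ℤ) + ((b.1 i).val : ℤ) * ((b.2 i).val : ℤ))
    with hMdef
  have hQ : ∑ i, ∑ j, (-v i) * τ i j * (-v j) = ∑ i, ∑ j, v i * τ i j * v j := by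
    refine Finset.sum_congr rfl fun i _ => Finset.sum_congr rfl fun j _ => by ring
  have hL : ∑ i, (-v i) * ((0 : ℂ) + ((b.2 i).val : ℂ) / 2) = -L := by
    rw [hLdef, ← Finset.sum_neg_distrib]
    exact Finset.sum_congr rfl fun i _ => by ring
  rw [hQ, hL]
  have h4 : (4 : ℂ) * L = (M : ℂ) := by
    rw [hLdef, Finset.mul_sum, hMdef]
    push_cast
    refine Finset.sum_congr rfl fun i _ => ?_
    rw [hvdef]
    unfold thetaVec
    ring
  have hMo : Odd M := by
    have : M = 2 * (∑ i, n i * ((b.2 i).val : ℤ)) + (charAbs b : ℤ) := by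
      rw [hMdef]
      unfold charAbs
      push_cast
      rw [Finset.mul_sum, ← Finset.sum_add_distrib]
      exact Finset.sum_congr rfl fun i _ => by ring
    rw [this]
    exact (Even.add_odd ⟨_, (two_mul _)⟩ (by exact_mod_cast hb))
  have hsplit : (Real.pi : ℂ) * Complex.I * (∑ i, ∑ j, v i * τ i j * v j)
        + 2 * (Real.pi : ℂ) * Complex.I * (-L)
      = ((Real.pi : ℂ) * Complex.I * (∑ i, ∑ j, v i * τ i j * v j)
        + 2 * (Real.pi : ℂ) * Complex.I * L)
        + ((-M : ℤ) : ℂ) * ((Real.pi : ℂ) * Complex.I) := by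
    push_cast
    linear_combination (-(Real.pi : ℂ) * Complex.I) * h4
  rw [hsplit, Complex.exp_add, exp_int_pi (-M) hMo.neg]
  ring

/-- The involution `n ↦ -n - b′` on `ℤ^g`. -/
def negShift {g : ℕ} (b : ThetaChar g) : (Fin g → ℤ) ≃ (Fin g → ℤ) where
  toFun n := fun i => -(n i) - ((b.1 i).val : ℤ)
  invFun n := fun i => -(n i) - ((b.1 i).val : ℤ)
  left_inv n := by funext i; ring
  right_inv n := by funext i; ring

lemma thetanull_odd {g : ℕ} (b : ThetaChar g) (hb : Odd (charAbs b))
    (τ : Matrix (Fin g) (Fin g) ℂ) : Thetanull b τ = 0 := by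
  have key : Thetanull b τ = - Thetanull b τ := by
    calc Thetanull b τ = ∑' n, thetaTerm b 0 τ ((negShift b) n) :=
          ((negShift b).tsum_eq _).symm
    _ = ∑' n, - thetaTerm b 0 τ n := by
          refine tsum_congr fun n => ?_
          exact thetaTerm_negShift b τ hb n
    _ = - Thetanull b τ := by rw [tsum_neg]; rfl
  have h2 : Thetanull b τ + Thetanull b τ = 0 := by
    nth_rewrite 1 [key]; ring
  exact add_self_eq_zero.mp h2

/-- for odd `a`, `∑_{b ∈ 𝔎₊} (−1)^{a′ᵀb″} θ_{a+b}² θ_b² = 0`. -/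
theorem odd_char_theta_sum_vanishes (g : ℕ) (hg : 1 ≤ g)
    (a : ThetaChar g) (ha : ¬ IsEvenChar a)
    (τ : Matrix (Fin g) (Fin g) ℂ) (hτ : τ ∈ SiegelHalf g) :
    ∑ b ∈ Finset.univ.filter (IsEvenChar (g := g)),
        (-1 : ℂ) ^ (∑ i, (a.1 i).val * (b.2 i).val) *
          Thetanull (charAdd a b) τ ^ 2 * Thetanull b τ ^ 2 = 0 := by
  classical
  have haodd : Odd (charAbs a) := Nat.not_even_iff_odd.mp ha
  have hext : ∑ b ∈ Finset.univ.filter (IsEvenChar (g := g)),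
        ((-1 : ℂ) ^ (∑ i, (a.1 i).val * (b.2 i).val) *
          Thetanull (charAdd a b) τ ^ 2 * Thetanull b τ ^ 2)
      = ∑ b : ThetaChar g,
        ((-1 : ℂ) ^ (∑ i, (a.1 i).val * (b.2 i).val) *
          Thetanull (charAdd a b) τ ^ 2 * Thetanull b τ ^ 2) := by
    refine Finset.sum_filter_of_ne fun b _ hF => ?_
    by_contra hb
    exact hF (by rw [thetanull_odd b (Nat.not_even_iff_odd.mp hb) τ]; ring)
  rw [hext]
  refine Finset.sum_ninvolution (charAdd a) ?_ ?_ (fun b => Finset.mem_univ _)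
    (charAdd_charAdd a)
  · intro b
    have hsig := neg_one_pow_eq_neg (exponent_parity a b haodd)
    rw [charAdd_charAdd, hsig]
    ring
  · intro b _ hEq
    have h1 : a.1 + b.1 = b.1 := congrArg Prod.fst hEq
    have h10 : a.1 = 0 := by
      have := add_eq_right.mp h1
      exact this
    have : charAbs a = 0 := by
      unfold charAbs
      refine Finset.sum_eq_zero fun i _ => ?_
      rw [h10]
      simp
    rw [this] at haodd
    exact absurd (Nat.odd_iff.mp haodd) (by omega)
end
end

section
/- Let γ = (A B; C D) be a 2g×2g integer symplectic matrix written in g×g blocks, let τ ∈ ℌ_g, suppose that Cτ+D is invertible and that γ·τ := (Aτ+B)(Cτ+D)^{−1} lies in ℌ_g for every τ ∈ ℌ_g, and let f : ℌ_g → ℂ be a holomorphic function satisfying f(γ·σ) = f(σ) for all σ ∈ ℌ_g. Then, for every τ ∈ ℌ_g, the symmetric matrix δf := (δ_{jl}f)_{1≤j,l≤g} satisfies (δf)(γ·τ) = (Cτ+D)·(δf)(τ)·(Cτ+D)ᵀ. -/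
open Complex BigOperators Finset Matrix

noncomputable section

attribute [local instance] Matrix.normedAddCommGroup Matrix.normedSpace

section AuxLemmas
variable {g : ℕ}

theorem hasDerivAt_matrix {F : ℂ → Matrix (Fin g) (Fin g) ℂ} {F' : Matrix (Fin g) (Fin g) ℂ}
    {t : ℂ} : HasDerivAt F F' t ↔ ∀ i j, HasDerivAt (fun s => F s i j) (F' i j) t := by
  rw [show HasDerivAt F F' t ↔ ∀ i, HasDerivAt (fun s => F s i) (F' i) t from hasDerivAt_pi]
  refine forall_congr' fun i => ?_
  exact hasDerivAt_pi

theorem HasDerivAt.matmul {F G : ℂ → Matrix (Fin g) (Fin g) ℂ} {F' G' : Matrix (Fin g) (Fin g) ℂ}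
    {t : ℂ} (hF : HasDerivAt F F' t) (hG : HasDerivAt G G' t) :
    HasDerivAt (fun s => F s * G s) (F' * G t + F t * G') t := by
  rw [hasDerivAt_matrix] at hF hG ⊢
  intro i j
  have : ∀ s, (F s * G s) i j = ∑ k, F s i k * G s k j := fun s => Matrix.mul_apply
  simp only [Matrix.mul_apply, Matrix.add_apply]
  rw [← Finset.sum_add_distrib]
  exact HasDerivAt.fun_sum (fun k _ => (hF i k).mul (hG k j))


theorem differentiableAt_matrix_det {F : ℂ → Matrix (Fin g) (Fin g) ℂ} {t : ℂ}
    (hF : ∀ i j, DifferentiableAt ℂ (fun s => F s i j) t) :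
    DifferentiableAt ℂ (fun s => (F s).det) t := by
  simp only [Matrix.det_apply']
  exact DifferentiableAt.fun_sum fun σ _ =>
    ((DifferentiableAt.fun_finsetProd fun i _ => hF (σ i) i).const_mul _)

theorem continuous_matrix_det {F : ℂ → Matrix (Fin g) (Fin g) ℂ}
    (hF : ∀ i j, Continuous (fun s => F s i j)) :
    Continuous (fun s => (F s).det) := by
  simp only [Matrix.det_apply']
  exact continuous_finset_sum _ fun σ _ =>
    continuous_const.mul (continuous_finset_prod _ fun i _ => hF (σ i) i)

theorem differentiableAt_matrix_inv_entry {F : ℂ → Matrix (Fin g) (Fin g) ℂ} {t : ℂ}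
    (hF : ∀ i j, DifferentiableAt ℂ (fun s => F s i j) t)
    (hdet : (F t).det ≠ 0) (i j : Fin g) :
    DifferentiableAt ℂ (fun s => (F s)⁻¹ i j) t := by
  have hformula : ∀ s, (F s)⁻¹ i j = ((F s).det)⁻¹ * (F s).adjugate i j := by
    intro s
    rw [Matrix.inv_def, Matrix.smul_apply, Ring.inverse_eq_inv, smul_eq_mul]
  simp only [hformula]
  refine DifferentiableAt.mul ((differentiableAt_matrix_det hF).inv hdet) ?_
  simp only [Matrix.adjugate_apply]
  refine differentiableAt_matrix_det fun a b => ?_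
  by_cases ha : a = j
  · simp only [Matrix.updateRow_apply, ha, if_true]
    exact differentiableAt_const _
  · simp only [Matrix.updateRow_apply, ha, if_false]
    exact hF a b


theorem hasDerivAt_matrix_inv {F : ℂ → Matrix (Fin g) (Fin g) ℂ} {F' : Matrix (Fin g) (Fin g) ℂ}
    {t : ℂ} (hF : HasDerivAt F F' t) (hcont : ∀ i j, Continuous fun s => F s i j)
    (hdet : IsUnit (F t).det) :
    HasDerivAt (fun s => (F s)⁻¹) (-((F t)⁻¹ * F' * (F t)⁻¹)) t := by
  have hdet' : (F t).det ≠ 0 := by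
    rcases hdet with ⟨u, hu⟩; simp [← hu]
  have hent : ∀ i j, DifferentiableAt ℂ (fun s => F s i j) t :=
    fun i j => ((hasDerivAt_matrix.mp hF) i j).differentiableAt
  set R' : Matrix (Fin g) (Fin g) ℂ := Matrix.of fun i j => deriv (fun s => (F s)⁻¹ i j) t with hR'
  have hR : HasDerivAt (fun s => (F s)⁻¹) R' t := by
    rw [hasDerivAt_matrix]
    intro i j
    exact (differentiableAt_matrix_inv_entry hent hdet' i j).hasDerivAt
  have hprod := hR.matmul hF
  have hev : (fun s => (F s)⁻¹ * F s) =ᶠ[nhds t] (fun _ => (1 : Matrix (Fin g) (Fin g) ℂ)) := by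
    have hne : ∀ᶠ s in nhds t, (F s).det ≠ 0 :=
      (continuous_matrix_det hcont).continuousAt.eventually_ne hdet'
    filter_upwards [hne] with s hs
    exact Matrix.nonsing_inv_mul _ (isUnit_iff_ne_zero.mpr hs)
  have h0 : HasDerivAt (fun s => (F s)⁻¹ * F s) (0 : Matrix (Fin g) (Fin g) ℂ) t :=
    HasDerivAt.congr_of_eventuallyEq (hasDerivAt_const t 1) hev
  have huniq : R' * F t + (F t)⁻¹ * F' = 0 := by
    have := hprod.unique h0
    exact this
  have hK : F t * (F t)⁻¹ = 1 := Matrix.mul_nonsing_inv _ hdet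
  have hsolve : R' = -((F t)⁻¹ * F' * (F t)⁻¹) := by
    have h1 : R' * F t = -((F t)⁻¹ * F') := by
      have := eq_neg_of_add_eq_zero_left huniq
      exact this
    calc R' = R' * (F t * (F t)⁻¹) := by rw [hK, mul_one]
    _ = (R' * F t) * (F t)⁻¹ := by rw [mul_assoc]
    _ = -((F t)⁻¹ * F' * (F t)⁻¹) := by rw [h1]; simp [mul_assoc]
  rwa [hsolve] at hR


theorem quad_scale (M : Matrix (Fin g) (Fin g) ℝ) (a : ℝ) (x : Fin g → ℝ) :
    (a • x) ⬝ᵥ (M *ᵥ (a • x)) = a^2 * (x ⬝ᵥ (M *ᵥ x)) := by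
  rw [Matrix.mulVec_smul, dotProduct_smul, smul_dotProduct, smul_eq_mul, smul_eq_mul]
  ring

theorem quad_abs_le (M : Matrix (Fin g) (Fin g) ℝ) (x : Fin g → ℝ) :
    |x ⬝ᵥ (M *ᵥ x)| ≤ (∑ i, ∑ j, |M i j|) * ‖x‖^2 := by
  have h1 : x ⬝ᵥ (M *ᵥ x) = ∑ i, ∑ j, x i * (M i j * x j) := by
    simp [dotProduct, Matrix.mulVec, Finset.mul_sum]
  rw [h1, Finset.sum_mul]
  refine (Finset.abs_sum_le_sum_abs _ _).trans (Finset.sum_le_sum fun i _ => ?_)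
  rw [Finset.sum_mul]
  refine (Finset.abs_sum_le_sum_abs _ _).trans (Finset.sum_le_sum fun j _ => ?_)
  have hxi : |x i| ≤ ‖x‖ := by
    simpa [Real.norm_eq_abs] using norm_le_pi_norm x i
  have hxj : |x j| ≤ ‖x‖ := by
    simpa [Real.norm_eq_abs] using norm_le_pi_norm x j
  have hnn : (0:ℝ) ≤ ‖x‖ := norm_nonneg x
  calc |x i * (M i j * x j)| = |M i j| * (|x i| * |x j|) := by
        rw [abs_mul, abs_mul]; ring
  _ ≤ |M i j| * (‖x‖ * ‖x‖) := by
        refine mul_le_mul_of_nonneg_left ?_ (abs_nonneg _)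
        exact mul_le_mul hxi hxj (abs_nonneg _) hnn
  _ = |M i j| * ‖x‖^2 := by ring

theorem real_isHermitian_of_isSymm {M : Matrix (Fin g) (Fin g) ℝ} (h : M.IsSymm) :
    M.IsHermitian := by
  unfold Matrix.IsHermitian
  ext i j
  simp only [Matrix.conjTranspose_apply, star_trivial]
  exact congrFun (congrFun h j) i |>.symm ▸ rfl

theorem posdef_perturb (hg : 1 ≤ g) (P Q : Matrix (Fin g) (Fin g) ℝ) (hP : P.PosDef)
    (hQ : Q.IsSymm) : ∀ᶠ s : ℝ in nhds 0, (P + s • Q).PosDef := by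
  haveI : NeZero g := ⟨by omega⟩
  set f : (Fin g → ℝ) → ℝ := fun x => x ⬝ᵥ (P *ᵥ x) with hf
  have hfc : Continuous f := by
    have : f = fun x => ∑ i, ∑ j, x i * (P i j * x j) := by
      funext x; simp [hf, dotProduct, Matrix.mulVec, Finset.mul_sum]
    rw [this]
    exact continuous_finset_sum _ fun i _ => continuous_finset_sum _ fun j _ =>
      (continuous_apply i).mul (continuous_const.mul (continuous_apply j))
  have hne : (Metric.sphere (0 : Fin g → ℝ) 1).Nonempty := by
    refine ⟨Pi.single ⟨0, by omega⟩ 1, ?_⟩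
    rw [Metric.mem_sphere, dist_zero_right, Pi.norm_single]
    norm_num
  obtain ⟨x0, hx0mem, hx0min⟩ :=
    (isCompact_sphere (0 : Fin g → ℝ) 1).exists_isMinOn hne hfc.continuousOn
  have hx0ne : x0 ≠ 0 := by
    intro h
    rw [Metric.mem_sphere, dist_zero_right, h] at hx0mem
    simp at hx0mem
  have hcpos : 0 < f x0 := by
    have := hP.dotProduct_mulVec_pos hx0ne
    simpa [hf] using this
  set c := f x0 with hc
  set K := ∑ i, ∑ j, |Q i j| with hK
  have hKnn : (0:ℝ) ≤ K := Finset.sum_nonneg fun i _ => Finset.sum_nonneg fun j _ => abs_nonneg _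
  have hquadP : ∀ x : Fin g → ℝ, c * ‖x‖^2 ≤ f x := by
    intro x
    rcases eq_or_ne x 0 with rfl | hx
    · simp [hf]
    · have hnx : (0:ℝ) < ‖x‖ := norm_pos_iff.mpr hx
      have hu : (‖x‖⁻¹ • x) ∈ Metric.sphere (0 : Fin g → ℝ) 1 := by
        rw [Metric.mem_sphere, dist_zero_right, norm_smul]
        simp [abs_of_pos (inv_pos.mpr hnx), inv_mul_cancel₀ hnx.ne']
      have hmin : c ≤ f (‖x‖⁻¹ • x) := hx0min hu
      have hfu : f (‖x‖⁻¹ • x) = (‖x‖⁻¹)^2 * f x := quad_scale P _ x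
      rw [hfu] at hmin
      have := mul_le_mul_of_nonneg_left hmin (le_of_lt (by positivity : (0:ℝ) < ‖x‖^2))
      calc c * ‖x‖^2 = ‖x‖^2 * c := by ring
      _ ≤ ‖x‖^2 * ((‖x‖⁻¹)^2 * f x) := this
      _ = f x := by field_simp
  have hball : Set.Ioo (-(c/(K+1))) (c/(K+1)) ∈ nhds (0:ℝ) :=
    Ioo_mem_nhds (neg_lt_zero.mpr (by positivity)) (by positivity)
  filter_upwards [hball] with s hs
  have hsabs : |s| < c / (K+1) := abs_lt.mpr ⟨hs.1, hs.2⟩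
  refine Matrix.PosDef.of_dotProduct_mulVec_pos ?_ ?_
  · refine real_isHermitian_of_isSymm (Matrix.IsSymm.add ?_ (hQ.smul s))
    unfold Matrix.IsSymm
    ext i j
    have := congrFun (congrFun hP.1 i) j
    simpa [Matrix.conjTranspose_apply] using this
  · intro x hx
    have h1 : star x ⬝ᵥ ((P + s • Q) *ᵥ x) = f x + s * (x ⬝ᵥ (Q *ᵥ x)) := by
      simp [hf, Matrix.add_mulVec, Matrix.smul_mulVec, dotProduct_add, dotProduct_smul,
        star_trivial, smul_eq_mul]
    rw [h1]
    have hnx : (0:ℝ) < ‖x‖ := norm_pos_iff.mpr hx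
    have h2 : |s * (x ⬝ᵥ (Q *ᵥ x))| ≤ |s| * (K * ‖x‖^2) := by
      rw [abs_mul]
      exact mul_le_mul_of_nonneg_left (quad_abs_le Q x) (abs_nonneg _)
    have h3 : |s| * (K * ‖x‖^2) < c * ‖x‖^2 := by
      have h4 : |s| * K < c := by
        calc |s| * K ≤ |s| * (K+1) := by nlinarith [abs_nonneg s]
        _ < (c / (K+1)) * (K+1) := by
            have : (0:ℝ) < K + 1 := by linarith
            exact mul_lt_mul_of_pos_right hsabs this
        _ = c := by field_simp
      calc |s| * (K * ‖x‖^2) = (|s| * K) * ‖x‖^2 := by ring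
      _ < c * ‖x‖^2 := by
          exact mul_lt_mul_of_pos_right h4 (by positivity)
    have h5 := hquadP x
    have h6 : -(s * (x ⬝ᵥ (Q *ᵥ x))) ≤ |s * (x ⬝ᵥ (Q *ᵥ x))| := neg_le_abs _
    linarith


theorem siegel_line_mem (hg : 1 ≤ g) {τ E : Matrix (Fin g) (Fin g) ℂ}
    (hτ : τ ∈ SiegelHalf g) (hE : E.IsSymm) (hEreal : ∀ i j, (E i j).im = 0) :
    ∀ᶠ t : ℂ in nhds 0, τ + t • E ∈ SiegelHalf g := by
  obtain ⟨hτs, hτp⟩ := hτ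
  set Er : Matrix (Fin g) (Fin g) ℝ := Matrix.of fun i j => (E i j).re with hEr
  have hErs : Er.IsSymm := by
    unfold Matrix.IsSymm
    ext i j
    have := congrFun (congrFun hE i) j
    simp only [Matrix.transpose_apply] at this ⊢
    simp only [hEr, Matrix.of_apply]
    rw [this]
  have hper := posdef_perturb hg _ Er hτp hErs
  have htend : Filter.Tendsto (fun t : ℂ => t.im) (nhds 0) (nhds (0:ℝ)) := by
    simpa using (Complex.continuous_im.tendsto 0)
  filter_upwards [htend.eventually hper] with t ht
  refine ⟨hτs.add (hE.smul t), ?_⟩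
  have heq : (Matrix.of fun i j => ((τ + t • E) i j).im)
      = (Matrix.of fun i j => (τ i j).im) + t.im • Er := by
    ext i j
    simp [Matrix.add_apply, Matrix.smul_apply, smul_eq_mul, Complex.add_im, Complex.mul_im,
      hEreal i j, hEr]
  rw [heq]
  exact ht

theorem hasDerivAt_comp_curve {f : Matrix (Fin g) (Fin g) ℂ → ℂ}
    (hf : DifferentiableOn ℂ f (SiegelHalf g))
    {c : ℂ → Matrix (Fin g) (Fin g) ℂ} {v : Matrix (Fin g) (Fin g) ℂ}
    (hc : HasDerivAt c v 0) (hc0 : c 0 ∈ SiegelHalf g)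
    (hmem : ∀ᶠ t : ℂ in nhds 0, c t ∈ SiegelHalf g) :
    HasDerivAt (fun t => f (c t)) (fderivWithin ℂ f (SiegelHalf g) (c 0) v) 0 := by
  have hd := (hf (c 0) hc0).hasFDerivWithinAt
  have hcomp := hd.comp_hasDerivWithinAt 0
    (hc.hasDerivWithinAt (s := c ⁻¹' SiegelHalf g)) (Set.mapsTo_preimage c _)
  exact hcomp.hasDerivAt hmem


-- basis direction entry computation
theorem conj_std_entry (K : Matrix (Fin g) (Fin g) ℂ) (j l : Fin g) :
    Kᵀ * ((Matrix.single j l 1 : Matrix (Fin g) (Fin g) ℂ)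
        + Matrix.single l j 1) * K
      = Matrix.of fun p q => K j p * K l q + K l p * K j q := by
  ext p q
  simp only [Matrix.mul_apply, Matrix.add_apply, Matrix.transpose_apply,
    Matrix.single, Matrix.of_apply, mul_ite, mul_one, mul_zero, ite_mul, zero_mul,
    add_mul, Finset.sum_add_distrib, ite_and]
  simp [mul_ite, mul_zero, mul_one, ite_mul, zero_mul, Finset.sum_ite_eq,
    Finset.sum_ite_eq', mul_add, add_mul, Finset.sum_add_distrib, mul_comm]

theorem std_transpose (j l : Fin g) :
    (Matrix.single j l (1:ℂ))ᵀ = Matrix.single l j 1 := by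
  ext a b
  simp only [Matrix.transpose_apply, Matrix.single, Matrix.of_apply]
  by_cases h1 : j = b <;> by_cases h2 : l = a <;> simp [*]

theorem std_pair_symm (j l : Fin g) :
    (Matrix.single j l (1:ℂ) + Matrix.single l j 1).IsSymm := by
  unfold Matrix.IsSymm
  rw [Matrix.transpose_add, std_transpose, std_transpose, add_comm]

theorem std_pair_real (j l i i' : Fin g) :
    (((Matrix.single j l (1:ℂ) + Matrix.single l j 1) :
      Matrix (Fin g) (Fin g) ℂ) i i').im = 0 := by
  simp only [Matrix.add_apply, Matrix.single, Matrix.of_apply]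
  split <;> split <;> simp

theorem delta_comm (j l : Fin g) (f : Matrix (Fin g) (Fin g) ℂ → ℂ)
    (x : Matrix (Fin g) (Fin g) ℂ) : delta j l f x = delta l j f x := by
  unfold delta
  by_cases h : j = l
  · subst h; rfl
  · rw [if_neg h, if_neg (Ne.symm h), add_comm]


end AuxLemmas


/-- the matrix of `δ`-derivatives of a `γ`-invariant holomorphic
function transforms as a `Sym²`-modular tensor. -/
theorem delta_matrix_modular_transform (g : ℕ) (hg : 1 ≤ g)
    (A B C D : Matrix (Fin g) (Fin g) ℤ)
    (hsymp : (Matrix.fromBlocks A B C D)ᵀ *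
        Matrix.fromBlocks 0 1 (-1) 0 * Matrix.fromBlocks A B C D =
        Matrix.fromBlocks 0 1 (-1) 0)
    (τ : Matrix (Fin g) (Fin g) ℂ) (hτ : τ ∈ SiegelHalf g)
    (hinv : IsUnit ((C.map (Int.cast : ℤ → ℂ)) * τ + D.map (Int.cast : ℤ → ℂ)).det)
    (hact : ∀ σ ∈ SiegelHalf g,
      ((A.map (Int.cast : ℤ → ℂ)) * σ + B.map (Int.cast : ℤ → ℂ)) *
        ((C.map (Int.cast : ℤ → ℂ)) * σ + D.map (Int.cast : ℤ → ℂ))⁻¹ ∈ SiegelHalf g)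
    (f : Matrix (Fin g) (Fin g) ℂ → ℂ)
    (hf : DifferentiableOn ℂ f (SiegelHalf g))
    (hinvf : ∀ σ ∈ SiegelHalf g,
      f (((A.map (Int.cast : ℤ → ℂ)) * σ + B.map (Int.cast : ℤ → ℂ)) *
        ((C.map (Int.cast : ℤ → ℂ)) * σ + D.map (Int.cast : ℤ → ℂ))⁻¹) = f σ) :
    (Matrix.of fun j l => delta j l f
        (((A.map (Int.cast : ℤ → ℂ)) * τ + B.map (Int.cast : ℤ → ℂ)) *
          ((C.map (Int.cast : ℤ → ℂ)) * τ + D.map (Int.cast : ℤ → ℂ))⁻¹))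
      = ((C.map (Int.cast : ℤ → ℂ)) * τ + D.map (Int.cast : ℤ → ℂ)) *
          (Matrix.of fun j l => delta j l f τ) *
          ((C.map (Int.cast : ℤ → ℂ)) * τ + D.map (Int.cast : ℤ → ℂ))ᵀ := by
  classical
  set Ac := A.map (Int.cast : ℤ → ℂ) with hAc
  set Bc := B.map (Int.cast : ℤ → ℂ) with hBc
  set Cc := C.map (Int.cast : ℤ → ℂ) with hCc
  set Dc := D.map (Int.cast : ℤ → ℂ) with hDc
  set M := Cc * τ + Dc with hM
  set N := Ac * τ + Bc with hN
  set K := M⁻¹ with hK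
  set G := N * K with hG
  -- block relations over ℤ
  have hb := hsymp
  rw [Matrix.fromBlocks_transpose, Matrix.fromBlocks_multiply, Matrix.fromBlocks_multiply] at hb
  have h11 := congrArg Matrix.toBlocks₁₁ hb
  have h12 := congrArg Matrix.toBlocks₁₂ hb
  have h21 := congrArg Matrix.toBlocks₂₁ hb
  have h22 := congrArg Matrix.toBlocks₂₂ hb
  simp only [Matrix.toBlocks_fromBlocks₁₁, Matrix.toBlocks_fromBlocks₁₂,
    Matrix.toBlocks_fromBlocks₂₁, Matrix.toBlocks_fromBlocks₂₂,
    Matrix.mul_zero, Matrix.zero_mul, Matrix.mul_one, Matrix.one_mul, add_zero, zero_add,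
    Matrix.mul_neg, Matrix.neg_mul, mul_zero, zero_mul, mul_one, one_mul] at h11 h12 h21 h22
  -- cast helpers
  have castmul : ∀ X Y : Matrix (Fin g) (Fin g) ℤ,
      (X * Y).map (Int.cast : ℤ → ℂ) = X.map (Int.cast : ℤ → ℂ) * Y.map (Int.cast : ℤ → ℂ) := by
    intro X Y
    ext i j
    simp [Matrix.map_apply, Matrix.mul_apply]
  have castsub : ∀ X Y : Matrix (Fin g) (Fin g) ℤ,
      (X - Y).map (Int.cast : ℤ → ℂ) = X.map (Int.cast : ℤ → ℂ) - Y.map (Int.cast : ℤ → ℂ) := by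
    intro X Y
    ext i j
    simp [Matrix.map_apply]
  have castone : ((1 : Matrix (Fin g) (Fin g) ℤ)).map (Int.cast : ℤ → ℂ) = 1 := by
    ext i j
    simp [Matrix.map_apply, Matrix.one_apply, apply_ite (Int.cast : ℤ → ℂ)]
  have casttr : ∀ X : Matrix (Fin g) (Fin g) ℤ,
      (Xᵀ).map (Int.cast : ℤ → ℂ) = (X.map (Int.cast : ℤ → ℂ))ᵀ := by
    intro X
    ext i j
    simp [Matrix.map_apply]
  have castzero : ((0 : Matrix (Fin g) (Fin g) ℤ)).map (Int.cast : ℤ → ℂ) = 0 := by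
    ext i j
    simp [Matrix.map_apply]
  -- relations over ℤ
  have r1 : Aᵀ * C - Cᵀ * A = 0 := by rwa [neg_add_eq_sub] at h11
  have r2 : Aᵀ * D - Cᵀ * B = 1 := by rwa [neg_add_eq_sub] at h12
  have r3 : Dᵀ * A - Bᵀ * C = 1 := by
    rw [neg_add_eq_sub] at h21
    have := congrArg (fun X : Matrix (Fin g) (Fin g) ℤ => -X) h21
    simpa [neg_sub] using this
  have r4 : Dᵀ * B - Bᵀ * D = 0 := by
    rw [neg_add_eq_sub] at h22
    have := congrArg (fun X : Matrix (Fin g) (Fin g) ℤ => -X) h22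
    simpa [neg_sub] using this
  -- relations over ℂ
  have c1 : Ccᵀ * Ac - Acᵀ * Cc = 0 := by
    have := congrArg (fun X : Matrix (Fin g) (Fin g) ℤ => X.map (Int.cast : ℤ → ℂ)) r1
    simp only [castsub, castmul, casttr, castzero] at this
    rw [← neg_sub, this, neg_zero]
  have c2' : Ccᵀ * Bc - Acᵀ * Dc = -1 := by
    have := congrArg (fun X : Matrix (Fin g) (Fin g) ℤ => X.map (Int.cast : ℤ → ℂ)) r2
    simp only [castsub, castmul, casttr, castone] at this
    rw [← neg_sub, this]
  have c3 : Dcᵀ * Ac - Bcᵀ * Cc = 1 := by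
    have := congrArg (fun X : Matrix (Fin g) (Fin g) ℤ => X.map (Int.cast : ℤ → ℂ)) r3
    simpa only [castsub, castmul, casttr, castone] using this
  have c4 : Dcᵀ * Bc - Bcᵀ * Dc = 0 := by
    have := congrArg (fun X : Matrix (Fin g) (Fin g) ℤ => X.map (Int.cast : ℤ → ℂ)) r4
    simpa only [castsub, castmul, casttr, castzero] using this
  have hτs : τᵀ = τ := hτ.1
  -- key algebraic identities
  have id_main : Mᵀ * Ac - Nᵀ * Cc = 1 := by
    have expand : Mᵀ * Ac - Nᵀ * Cc
        = τ * (Ccᵀ * Ac - Acᵀ * Cc) + (Dcᵀ * Ac - Bcᵀ * Cc) := by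
      rw [hM, hN, Matrix.transpose_add, Matrix.transpose_mul, Matrix.transpose_add,
        Matrix.transpose_mul, hτs]
      noncomm_ring
    rw [expand, c1, c3, mul_zero, zero_add]
  have id_sym : Mᵀ * N - Nᵀ * M = 0 := by
    have expand : Mᵀ * N - Nᵀ * M
        = τ * (Ccᵀ * Ac - Acᵀ * Cc) * τ + τ * (Ccᵀ * Bc - Acᵀ * Dc)
          + (Dcᵀ * Ac - Bcᵀ * Cc) * τ + (Dcᵀ * Bc - Bcᵀ * Dc) := by
      rw [hM, hN, Matrix.transpose_add, Matrix.transpose_mul, Matrix.transpose_add,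
        Matrix.transpose_mul, hτs]
      noncomm_ring
    rw [expand, c1, c2', c3, c4]
    noncomm_ring
  -- inverses
  have hMK : M * K = 1 := Matrix.mul_nonsing_inv M hinv
  have hKM : K * M = 1 := Matrix.nonsing_inv_mul M hinv
  have hKtMt : Kᵀ * Mᵀ = 1 := by rw [← Matrix.transpose_mul, hMK, Matrix.transpose_one]
  have hMtKt : Mᵀ * Kᵀ = 1 := by rw [← Matrix.transpose_mul, hKM, Matrix.transpose_one]
  have hGsymm : Gᵀ = G := by
    have h2 : Nᵀ * M = Mᵀ * N := (sub_eq_zero.mp id_sym).symm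
    calc Gᵀ = Kᵀ * Nᵀ := by rw [hG, Matrix.transpose_mul]
    _ = Kᵀ * Nᵀ * (M * K) := by rw [hMK, mul_one]
    _ = Kᵀ * (Nᵀ * M) * K := by noncomm_ring
    _ = Kᵀ * (Mᵀ * N) * K := by rw [h2]
    _ = (Kᵀ * Mᵀ) * (N * K) := by noncomm_ring
    _ = G := by rw [hKtMt, one_mul, hG]
  have hAC : Ac - G * Cc = Kᵀ := by
    have hGKN : G * Cc = Kᵀ * Nᵀ * Cc := by
      rw [← hGsymm, hG, Matrix.transpose_mul]
    calc Ac - G * Cc = (Kᵀ * Mᵀ) * Ac - Kᵀ * Nᵀ * Cc := by rw [hKtMt, one_mul, hGKN]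
    _ = Kᵀ * (Mᵀ * Ac - Nᵀ * Cc) := by noncomm_ring
    _ = Kᵀ := by rw [id_main, mul_one]
  have hGmem : G ∈ SiegelHalf g := hact τ hτ
  -- directional derivative of f within the Siegel half space
  have hdirectional : ∀ x : Matrix (Fin g) (Fin g) ℂ, x ∈ SiegelHalf g →
      ∀ E : Matrix (Fin g) (Fin g) ℂ, E.IsSymm → (∀ i j, (E i j).im = 0) →
      HasDerivAt (fun t : ℂ => f (x + t • E)) (fderivWithin ℂ f (SiegelHalf g) x E) 0 := by
    intro x hx E hE hEr
    have hcurve : HasDerivAt (fun t : ℂ => x + t • E) E 0 := by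
      have h := ((hasDerivAt_id (0:ℂ)).smul_const E).const_add x; simp only [id_eq, one_smul] at h; exact h
    have hmem := siegel_line_mem hg hx hE hEr
    have h := hasDerivAt_comp_curve hf hcurve (by simpa using hx) hmem
    simpa using h
  have hπI : (Real.pi : ℂ) * Complex.I ≠ 0 := by
    simp [Real.pi_ne_zero, Complex.I_ne_zero, Complex.ofReal_eq_zero]
  -- δ in terms of the within-derivative on pair directions
  have hpair : ∀ x : Matrix (Fin g) (Fin g) ℂ, x ∈ SiegelHalf g → ∀ p q : Fin g,
      fderivWithin ℂ f (SiegelHalf g) x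
          (Matrix.single p q 1 + Matrix.single q p 1)
        = 2 * (Real.pi : ℂ) * Complex.I * delta p q f x := by
    intro x hx p q
    by_cases hpq : p = q
    · subst hpq
      have hsymm1 : (Matrix.single p p (1:ℂ)).IsSymm := std_transpose p p
      have hreal1 : ∀ i i' : Fin g,
          ((Matrix.single p p (1:ℂ) : Matrix (Fin g) (Fin g) ℂ) i i').im = 0 := by
        intro i i'
        simp only [Matrix.single, Matrix.of_apply]
        split <;> simp
      have h1 := hdirectional x hx (Matrix.single p p 1) hsymm1 hreal1
      have hderiv : deriv (fun t : ℂ => f (x + t • Matrix.single p p 1)) 0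
          = fderivWithin ℂ f (SiegelHalf g) x (Matrix.single p p 1) := h1.deriv
      have hmap := (fderivWithin ℂ f (SiegelHalf g) x).map_add
        (Matrix.single p p (1:ℂ)) (Matrix.single p p (1:ℂ))
      rw [hmap]
      unfold delta
      rw [if_pos rfl, hderiv]
      field_simp
      ring
    · have h1 := hdirectional x hx
        (Matrix.single p q 1 + Matrix.single q p 1)
        (std_pair_symm p q) (std_pair_real p q)
      unfold delta
      rw [if_neg hpq, h1.deriv]
      have hz : ∀ z : ℂ, 2 * (Real.pi : ℂ) * Complex.I *
          (1 / (2 * (Real.pi : ℂ) * Complex.I) * z) = z := by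
        intro z
        have h2 : (2 : ℂ) * (Real.pi : ℂ) * Complex.I ≠ 0 := by
          intro h
          apply hπI
          have h3 : (2:ℂ) * ((Real.pi : ℂ) * Complex.I) = 0 := by rw [← h]; ring
          exact (mul_eq_zero.mp h3).resolve_left two_ne_zero
        field_simp
      exact (hz _).symm
  -- curve rewriting helper
  have lincurve : ∀ (X Y E : Matrix (Fin g) (Fin g) ℂ) (t : ℂ),
      X * (τ + t • E) + Y = (X * τ + Y) + t • (X * E) := by
    intro X Y E t
    rw [Matrix.mul_add, Matrix.mul_smul]
    exact add_right_comm _ _ _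
  -- the key transformation identity
  have key : ∀ j l : Fin g,
      fderivWithin ℂ f (SiegelHalf g) G
          (Kᵀ * (Matrix.single j l 1 + Matrix.single l j 1) * K)
        = fderivWithin ℂ f (SiegelHalf g) τ
          (Matrix.single j l 1 + Matrix.single l j 1) := by
    intro j l
    set E : Matrix (Fin g) (Fin g) ℂ :=
      Matrix.single j l 1 + Matrix.single l j 1 with hE
    have hEs : E.IsSymm := std_pair_symm j l
    have hEr : ∀ i i', (E i i').im = 0 := std_pair_real j l
    have hQd : HasDerivAt (fun t : ℂ => M + t • (Cc * E)) (Cc * E) 0 := by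
      have h := ((hasDerivAt_id (0:ℂ)).smul_const (Cc * E)).const_add M; simp only [id_eq, one_smul] at h; exact h
    have hQcont : ∀ i j', Continuous fun s : ℂ => (M + s • (Cc * E)) i j' := by
      intro i j'
      simp only [Matrix.add_apply, Matrix.smul_apply, smul_eq_mul]
      exact continuous_const.add (continuous_id.mul continuous_const)
    have hQinv : HasDerivAt (fun t : ℂ => (M + t • (Cc * E))⁻¹) (-(K * (Cc * E) * K)) 0 := by
      have h := hasDerivAt_matrix_inv hQd hQcont (by simpa using hinv)
      simpa [hK] using h
    have hNd : HasDerivAt (fun t : ℂ => N + t • (Ac * E)) (Ac * E) 0 := by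
      have h := ((hasDerivAt_id (0:ℂ)).smul_const (Ac * E)).const_add N; simp only [id_eq, one_smul] at h; exact h
    have hφ : HasDerivAt (fun t : ℂ => (N + t • (Ac * E)) * (M + t • (Cc * E))⁻¹)
        (Kᵀ * E * K) 0 := by
      have h := hNd.matmul hQinv
      have h' : HasDerivAt (fun t : ℂ => (N + t • (Ac * E)) * (M + t • (Cc * E))⁻¹)
          ((Ac * E) * K + N * (-(K * (Cc * E) * K))) 0 := by
        simpa [hK] using h
      have hval : (Ac * E) * K + N * (-(K * (Cc * E) * K)) = Kᵀ * E * K := by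
        have hre : (Ac * E) * K + N * (-(K * (Cc * E) * K))
            = (Ac - (N * K) * Cc) * E * K := by noncomm_ring
        rw [hre, ← hG, hAC]
      rwa [hval] at h'
    have hlinemem := siegel_line_mem hg hτ hEs hEr
    have hφmem : ∀ᶠ t : ℂ in nhds 0,
        (N + t • (Ac * E)) * (M + t • (Cc * E))⁻¹ ∈ SiegelHalf g := by
      filter_upwards [hlinemem] with t ht
      have hmem := hact _ ht
      rwa [lincurve Ac Bc E t, lincurve Cc Dc E t, ← hM, ← hN] at hmem
    have hcomp1 : HasDerivAt (fun t : ℂ => f ((N + t • (Ac * E)) * (M + t • (Cc * E))⁻¹))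
        (fderivWithin ℂ f (SiegelHalf g) G (Kᵀ * E * K)) 0 := by
      have hNM : N * M⁻¹ = G := by rw [hG, hK]
      have hmem0 : (fun t : ℂ => (N + t • (Ac * E)) * (M + t • (Cc * E))⁻¹) 0
          ∈ SiegelHalf g := by
        simp only [zero_smul, add_zero]
        rw [hNM]
        exact hGmem
      have h := hasDerivAt_comp_curve hf hφ hmem0 hφmem
      simp only [zero_smul, add_zero] at h
      rwa [hNM] at h
    have hcomp2 : HasDerivAt (fun t : ℂ => f (τ + t • E))
        (fderivWithin ℂ f (SiegelHalf g) τ E) 0 := hdirectional τ hτ E hEs hEr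
    have heq : (fun t : ℂ => f (τ + t • E))
        =ᶠ[nhds 0] (fun t : ℂ => f ((N + t • (Ac * E)) * (M + t • (Cc * E))⁻¹)) := by
      filter_upwards [hlinemem] with t ht
      have hiv := hinvf _ ht
      rw [lincurve Ac Bc E t, lincurve Cc Dc E t, ← hM, ← hN] at hiv
      exact hiv.symm
    exact (hcomp1.congr_of_eventuallyEq heq).unique hcomp2
  -- expansion of the within-derivative over symmetric matrices
  have hexpand : ∀ x : Matrix (Fin g) (Fin g) ℂ, x ∈ SiegelHalf g →
      ∀ W : Matrix (Fin g) (Fin g) ℂ, W.IsSymm →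
      fderivWithin ℂ f (SiegelHalf g) x W
        = ∑ p, ∑ q, (Real.pi : ℂ) * Complex.I * (delta p q f x * W p q) := by
    intro x hx W hW
    have hdecomp : W = ∑ p, ∑ q, (W p q / 2) •
        (Matrix.single p q 1 + Matrix.single q p 1) := by
      ext a b
      have hWs : W b a = W a b := by
        have h := congrFun (congrFun hW a) b
        simpa using h
      have hsum : ∀ F : Fin g → Fin g → ℂ,
          (∑ x : Fin g, ∑ y : Fin g, if x = a then if y = b then F x y else 0 else 0)
            = F a b := by
        intro F
        rw [Finset.sum_eq_single a]
        · rw [Finset.sum_eq_single b]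
          · simp
          · intro y _ hy
            simp [hy]
          · intro h
            exact absurd (Finset.mem_univ b) h
        · intro x _ hx
          simp [hx]
        · intro h
          exact absurd (Finset.mem_univ a) h
      simp only [Matrix.sum_apply, Matrix.smul_apply, Matrix.add_apply,
        Matrix.single, Matrix.of_apply, smul_eq_mul, mul_add, ite_and,
        mul_ite, mul_one, mul_zero, Finset.sum_add_distrib, Finset.sum_ite_eq,
        Finset.sum_ite_eq', Finset.mem_univ, if_true, hWs, hsum]
      ring
    calc fderivWithin ℂ f (SiegelHalf g) x W
        = ∑ p, ∑ q, (W p q / 2) • fderivWithin ℂ f (SiegelHalf g) x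
            (Matrix.single p q 1 + Matrix.single q p 1) := by
          conv_lhs => rw [hdecomp]
          rw [map_sum]
          refine Finset.sum_congr rfl fun p _ => ?_
          rw [map_sum]
          refine Finset.sum_congr rfl fun q _ => ?_
          rw [ContinuousLinearMap.map_smul]
    _ = ∑ p, ∑ q, (Real.pi : ℂ) * Complex.I * (delta p q f x * W p q) := by
          refine Finset.sum_congr rfl fun p _ => Finset.sum_congr rfl fun q _ => ?_
          rw [hpair x hx p q, smul_eq_mul]
          ring
  -- assemble
  set DG : Matrix (Fin g) (Fin g) ℂ := Matrix.of fun p q => delta p q f G with hDG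
  have hDGsymm : DGᵀ = DG := by
    ext p q
    simp only [Matrix.transpose_apply, hDG, Matrix.of_apply]
    exact delta_comm q p f G
  have hKDK : ∀ a b : Fin g, (K * DG * Kᵀ) a b = ∑ p, ∑ q, DG p q * (K a p * K b q) := by
    intro a b
    rw [Matrix.mul_apply]
    simp only [Matrix.mul_apply, Matrix.transpose_apply, Finset.sum_mul]
    rw [Finset.sum_comm]
    exact Finset.sum_congr rfl fun p _ => Finset.sum_congr rfl fun q _ => by ring
  have hKDKs : (K * DG * Kᵀ)ᵀ = K * DG * Kᵀ := by
    rw [Matrix.transpose_mul, Matrix.transpose_mul, Matrix.transpose_transpose, hDGsymm]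
    noncomm_ring
  have hentry : ∀ j l : Fin g, (K * DG * Kᵀ) j l = delta j l f τ := by
    intro j l
    have hk := key j l
    rw [conj_std_entry K j l] at hk
    have hWsym : (Matrix.of fun p q => K j p * K l q + K l p * K j q :
        Matrix (Fin g) (Fin g) ℂ).IsSymm := by
      unfold Matrix.IsSymm
      ext p q
      simp only [Matrix.transpose_apply, Matrix.of_apply]
      ring
    rw [hexpand G hGmem _ hWsym, hpair τ hτ j l] at hk
    have hlhs : (∑ p, ∑ q, (Real.pi : ℂ) * Complex.I *
        (delta p q f G * (Matrix.of fun p q => K j p * K l q + K l p * K j q :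
          Matrix (Fin g) (Fin g) ℂ) p q))
        = (Real.pi : ℂ) * Complex.I * ((K * DG * Kᵀ) j l + (K * DG * Kᵀ) l j) := by
      rw [hKDK j l, hKDK l j, mul_add, Finset.mul_sum, Finset.mul_sum,
        ← Finset.sum_add_distrib]
      refine Finset.sum_congr rfl fun p _ => ?_
      rw [Finset.mul_sum, Finset.mul_sum, ← Finset.sum_add_distrib]
      refine Finset.sum_congr rfl fun q _ => ?_
      simp only [Matrix.of_apply, hDG]
      ring
    rw [hlhs] at hk
    have hlj : (K * DG * Kᵀ) l j = (K * DG * Kᵀ) j l := by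
      conv_lhs => rw [← hKDKs]
      rw [Matrix.transpose_apply]
    rw [hlj] at hk
    have h2 : (2 : ℂ) * (Real.pi : ℂ) * Complex.I ≠ 0 := by
      intro h
      apply hπI
      have : (2:ℂ) * ((Real.pi : ℂ) * Complex.I) = 0 := by rw [← h]; ring
      exact (mul_eq_zero.mp this).resolve_left two_ne_zero
    apply mul_left_cancel₀ h2
    calc (2 : ℂ) * (Real.pi : ℂ) * Complex.I * ((K * DG * Kᵀ) j l)
        = (Real.pi : ℂ) * Complex.I * ((K * DG * Kᵀ) j l + (K * DG * Kᵀ) j l) := by ring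
    _ = 2 * (Real.pi : ℂ) * Complex.I * delta j l f τ := hk
  have hdmat : (Matrix.of fun j l => delta j l f τ) = K * DG * Kᵀ := by
    ext j l
    exact (hentry j l).symm
  rw [hdmat]
  calc DG = (M * K) * DG * (Kᵀ * Mᵀ) := by rw [hMK, hKtMt, one_mul, mul_one]
  _ = M * (K * DG * Kᵀ) * Mᵀ := by noncomm_ring
end
end

section
/- For every τ ∈ ℌ₂, the genus-2 thetanulls satisfy the three Riemann relations: θ_{00}(τ)²θ_{01}(τ)² − θ_{02}(τ)²θ_{03}(τ)² = θ_{20}(τ)²θ_{21}(τ)², θ_{00}(τ)²θ_{02}(τ)² − θ_{01}(τ)²θ_{03}(τ)² = θ_{10}(τ)²θ_{12}(τ)², and θ_{00}(τ)²θ_{03}(τ)² − θ_{01}(τ)²θ_{02}(τ)² = θ_{30}(τ)²θ_{33}(τ)². -/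
open Complex BigOperators Finset

noncomputable section

/-- The digit encoding of genus-2 half-characteristics:
`0 ↦ (0,0)`, `1 ↦ (0,1)`, `2 ↦ (1,0)`, `3 ↦ (1,1)`. -/
def digitChar : Fin 4 → (Fin 2 → Fin 2)
  | 0 => ![0, 0]
  | 1 => ![0, 1]
  | 2 => ![1, 0]
  | 3 => ![1, 1]

/-- The genus-2 characteristic denoted by the two digits `x y`. -/
def char2 (x y : Fin 4) : ThetaChar 2 := (digitChar x, digitChar y)

/-- The three derivations `δ₁ = δ_{11}`, `δ₂ = δ_{22}`, `δ₃ = δ_{12}` on `ℌ₂`. -/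
def delta3 (j : Fin 3) (f : Matrix (Fin 2) (Fin 2) ℂ → ℂ)
    (τ : Matrix (Fin 2) (Fin 2) ℂ) : ℂ :=
  match j with
  | 0 => delta (0 : Fin 2) 0 f τ
  | 1 => delta (1 : Fin 2) 1 f τ
  | 2 => delta (0 : Fin 2) 1 f τ

/-- `ψ_{a,j} = δ_j θ_a / θ_a` for `j = 1, 2, 3` in genus 2. -/
def psi3 (a : ThetaChar 2) (j : Fin 3) (τ : Matrix (Fin 2) (Fin 2) ℂ) : ℂ :=
  delta3 j (Thetanull a) τ / Thetanull a τ

/-- An enumeration of the ten even genus-2 characteristics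
`𝔎₊ = {00,01,02,03,10,12,20,21,30,33}`. -/
def evenChar2 : Fin 10 → ThetaChar 2 :=
  ![char2 0 0, char2 0 1, char2 0 2, char2 0 3, char2 1 0,
    char2 1 2, char2 2 0, char2 2 1, char2 3 0, char2 3 3]


namespace G2R

/-! ### Auxiliary development for the genus-2 Riemann relations -/

lemma gauss1 {K : ℝ} (hK : 0 < K) (α : ℝ) :
    Summable fun n : ℤ => Real.exp (-K * ((n : ℝ) + α) ^ 2) := by
  have h := summable_pow_mul_jacobiTheta₂_term_bound (K * |α| / Real.pi)
    (T := K / Real.pi) (by positivity) 0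
  simp only [pow_zero, one_mul] at h
  refine h.of_nonneg_of_le (fun n => (Real.exp_pos _).le) (fun n => ?_)
  rw [Real.exp_le_exp]
  have h1 : -(α * (n : ℝ)) ≤ |α| * |(n : ℝ)| := by
    rw [← abs_mul]; exact neg_le_abs _
  have h2 : ((|n| : ℤ) : ℝ) = |(n : ℝ)| := by push_cast; rfl
  rw [h2]
  have hπ : (Real.pi : ℝ) ≠ 0 := Real.pi_ne_zero
  have : -Real.pi * (K / Real.pi * (n:ℝ) ^ 2 - 2 * (K * |α| / Real.pi) * |(n:ℝ)|)
      = -K * (n:ℝ)^2 + 2 * K * |α| * |(n:ℝ)| := by field_simp; ring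
  rw [this]
  nlinarith [sq_nonneg α, hK.le, mul_nonneg (mul_nonneg hK.le (abs_nonneg α)) (abs_nonneg (n:ℝ))]

lemma gauss2 {K : ℝ} (hK : 0 < K) (α β : ℝ) :
    Summable fun n : Fin 2 → ℤ =>
      Real.exp (-K * (((n 0 : ℝ) + α) ^ 2 + ((n 1 : ℝ) + β) ^ 2)) := by
  rw [← ((finTwoArrowEquiv ℤ).symm).summable_iff]
  refine Summable.congr ((gauss1 hK α).mul_of_nonneg (gauss1 hK β)
    (fun n => (Real.exp_pos _).le) (fun n => (Real.exp_pos _).le)) (fun p => ?_)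
  rw [← Real.exp_add]
  simp [finTwoArrowEquiv, Function.comp]
  ring_nf

lemma quad_lb {A B C : ℝ} (hA : 0 < A) (hC : 0 < C) (hD : 0 < A * C - B ^ 2) :
    ∃ c > 0, ∀ x y : ℝ, c * (x ^ 2 + y ^ 2) ≤ A * x ^ 2 + 2 * B * x * y + C * y ^ 2 := by
  refine ⟨(A * C - B ^ 2) / (A + C), by positivity, fun x y => ?_⟩
  set c := (A * C - B ^ 2) / (A + C) with hc
  have hAC : 0 < A + C := by linarith
  have hcc : (A + C) * c = A * C - B ^ 2 := by rw [hc]; field_simp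
  have hAc : 0 < A - c := by
    have : c < A := by
      rw [hc, div_lt_iff₀ hAC]; nlinarith [sq_nonneg B]
    linarith
  have hid : (A - c) * (C - c) = B ^ 2 + c ^ 2 := by nlinarith [hcc]
  nlinarith [sq_nonneg ((A - c) * x + B * y), sq_nonneg (c * y), hAc,
    mul_pos hAc hAc, sq_nonneg x, sq_nonneg y]

lemma posdef_bound {τ : Matrix (Fin 2) (Fin 2) ℂ} (hτ : τ ∈ SiegelHalf 2) :
    ∃ c > 0, ∀ x y : ℝ, c * (x ^ 2 + y ^ 2) ≤
      (τ 0 0).im * x ^ 2 + ((τ 0 1).im + (τ 1 0).im) * x * y + (τ 1 1).im * y ^ 2 := by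
  obtain ⟨hsym, hpos⟩ := hτ
  have hB : (τ 1 0).im = (τ 0 1).im := by rw [hsym.apply 0 1]
  have hev : ∀ x y : ℝ, ¬(x = 0 ∧ y = 0) →
      0 < (τ 0 0).im * x ^ 2 + ((τ 0 1).im + (τ 1 0).im) * x * y + (τ 1 1).im * y ^ 2 := by
    intro x y hxy
    have hne : (![x, y] : Fin 2 → ℝ) ≠ 0 := by
      intro h
      exact hxy ⟨congrFun h 0, congrFun h 1⟩
    have : (0 : ℝ) < _ := hpos.dotProduct_mulVec_pos hne
    simpa [dotProduct, Matrix.mulVec, Fin.sum_univ_two, Matrix.of_apply] using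
      (by convert this using 1; simp [dotProduct, Matrix.mulVec, Fin.sum_univ_two]; ring :
        0 < (τ 0 0).im * x ^ 2 + ((τ 0 1).im + (τ 1 0).im) * x * y + (τ 1 1).im * y ^ 2)
  have hA : 0 < (τ 0 0).im := by simpa using hev 1 0 (by norm_num)
  have hC : 0 < (τ 1 1).im := by simpa using hev 0 1 (by norm_num)
  have hD : 0 < (τ 0 0).im * (τ 1 1).im - (τ 0 1).im ^ 2 := by
    have h5 := hev (τ 0 1).im (-(τ 0 0).im) (by intro ⟨h1, h2⟩; exact hA.ne' (by linarith))
    rw [hB] at h5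
    nlinarith [h5, hA, mul_pos hA hA]
  obtain ⟨c, hc, h⟩ := quad_lb hA hC hD
  exact ⟨c, hc, fun x y => by have := h x y; rw [hB]; nlinarith [this]⟩

lemma reIm (z : ℂ) : ((Real.pi : ℂ) * I * z).re = -(Real.pi * z.im) := by
  simp [Complex.mul_re, Complex.mul_im]

lemma qim (x y : ℝ) (t : ℂ) : ((x:ℂ) * t * (y:ℂ)).im = x * y * t.im := by
  simp [Complex.mul_im, Complex.mul_re]; ring

variable (τ : Matrix (Fin 2) (Fin 2) ℂ)

/-- the level-2 Gaussian term -/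
def e2 (ε : Fin 2 → Fin 2) (r : Fin 2 → ℤ) : ℂ :=
  Complex.exp ((Real.pi : ℂ) * Complex.I / 2 *
    (∑ i, ∑ j, ((2 * (r i : ℂ)) + ((ε i).val : ℂ)) * τ i j * ((2 * (r j : ℂ)) + ((ε j).val : ℂ))))

def F (c d : Fin 2) : ℂ := ∑' r : Fin 2 → ℤ, e2 τ ![c, d] r

variable {τ}

lemma norm_thetaTerm_le {c : ℝ}
    (hc : ∀ x y : ℝ, c * (x ^ 2 + y ^ 2) ≤
      (τ 0 0).im * x ^ 2 + ((τ 0 1).im + (τ 1 0).im) * x * y + (τ 1 1).im * y ^ 2)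
    (a b : Fin 2 → Fin 2) (n : Fin 2 → ℤ) :
    ‖thetaTerm (a, b) 0 τ n‖ ≤
      Real.exp (-(Real.pi * c) * (((n 0 : ℝ) + ((a 0).val : ℝ) / 2) ^ 2 +
        ((n 1 : ℝ) + ((a 1).val : ℝ) / 2) ^ 2)) := by
  set w : Fin 2 → ℝ := fun i => (n i : ℝ) + ((a i).val : ℝ) / 2 with hw
  have hvec : ∀ i, thetaVec (a, b) n i = ((w i : ℝ) : ℂ) := by
    intro i; simp only [thetaVec, hw]; push_cast; ring
  rw [thetaTerm, Complex.norm_exp]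
  rw [Real.exp_le_exp]
  simp only [hvec, Fin.sum_univ_two, Pi.zero_apply, zero_add]
  have hlin : (2 * (Real.pi:ℂ) * I * ((w 0 : ℂ) * (((b 0).val : ℂ) / 2) +
      (w 1 : ℂ) * (((b 1).val : ℂ) / 2))) =
      (Real.pi:ℂ) * I * ((((w 0 * (b 0).val + w 1 * (b 1).val) : ℝ)) : ℂ) := by
    push_cast; ring
  rw [hlin, Complex.add_re, reIm, reIm]
  rw [Complex.ofReal_im]
  have him : ((w 0:ℂ) * τ 0 0 * (w 0:ℂ) + (w 0:ℂ) * τ 0 1 * (w 1:ℂ) +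
      ((w 1:ℂ) * τ 1 0 * (w 0:ℂ) + (w 1:ℂ) * τ 1 1 * (w 1:ℂ))).im
      = (τ 0 0).im * (w 0)^2 + ((τ 0 1).im + (τ 1 0).im) * (w 0) * (w 1)
        + (τ 1 1).im * (w 1)^2 := by
    simp only [Complex.add_im, qim]; ring
  rw [him]
  have h0 : ((n 0 : ℝ) + ((a 0).val : ℝ) / 2) = w 0 := rfl
  have h1 : ((n 1 : ℝ) + ((a 1).val : ℝ) / 2) = w 1 := rfl
  rw [h0, h1]
  have := mul_le_mul_of_nonneg_left (hc (w 0) (w 1)) Real.pi_pos.le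
  nlinarith [this]

lemma norm_e2_le {c : ℝ}
    (hc : ∀ x y : ℝ, c * (x ^ 2 + y ^ 2) ≤
      (τ 0 0).im * x ^ 2 + ((τ 0 1).im + (τ 1 0).im) * x * y + (τ 1 1).im * y ^ 2)
    (ε : Fin 2 → Fin 2) (r : Fin 2 → ℤ) :
    ‖e2 τ ε r‖ ≤
      Real.exp (-(2 * Real.pi * c) * (((r 0 : ℝ) + ((ε 0).val : ℝ) / 2) ^ 2 +
        ((r 1 : ℝ) + ((ε 1).val : ℝ) / 2) ^ 2)) := by
  set v : Fin 2 → ℝ := fun i => 2 * (r i : ℝ) + ((ε i).val : ℝ) with hv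
  have hvec : ∀ i, (2 * (r i : ℂ)) + ((ε i).val : ℂ) = ((v i : ℝ) : ℂ) := by
    intro i; simp only [hv]; push_cast; ring
  rw [e2, Complex.norm_exp, Real.exp_le_exp]
  simp only [hvec, Fin.sum_univ_two]
  have h2 : ((Real.pi:ℂ) * I / 2 * ((v 0:ℂ) * τ 0 0 * (v 0:ℂ) + (v 0:ℂ) * τ 0 1 * (v 1:ℂ) +
      ((v 1:ℂ) * τ 1 0 * (v 0:ℂ) + (v 1:ℂ) * τ 1 1 * (v 1:ℂ))))
      = (Real.pi:ℂ) * I * (((v 0:ℂ) * τ 0 0 * (v 0:ℂ) + (v 0:ℂ) * τ 0 1 * (v 1:ℂ) +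
      ((v 1:ℂ) * τ 1 0 * (v 0:ℂ) + (v 1:ℂ) * τ 1 1 * (v 1:ℂ))) / 2) := by ring
  rw [h2, reIm]
  have him : (((v 0:ℂ) * τ 0 0 * (v 0:ℂ) + (v 0:ℂ) * τ 0 1 * (v 1:ℂ) +
      ((v 1:ℂ) * τ 1 0 * (v 0:ℂ) + (v 1:ℂ) * τ 1 1 * (v 1:ℂ))) / 2).im
      = ((τ 0 0).im * (v 0)^2 + ((τ 0 1).im + (τ 1 0).im) * (v 0) * (v 1)
        + (τ 1 1).im * (v 1)^2) / 2 := by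
    simp only [Complex.div_im, Complex.add_im, Complex.add_re, qim]
    simp [Complex.normSq]; ring
  rw [him]
  have h0 : ((r 0 : ℝ) + ((ε 0).val : ℝ) / 2) = v 0 / 2 := by
    show _ = (2 * (r 0 : ℝ) + ((ε 0).val : ℝ)) / 2; ring
  have h1 : ((r 1 : ℝ) + ((ε 1).val : ℝ) / 2) = v 1 / 2 := by
    show _ = (2 * (r 1 : ℝ) + ((ε 1).val : ℝ)) / 2; ring
  rw [h0, h1]
  have := mul_le_mul_of_nonneg_left (hc (v 0) (v 1)) Real.pi_pos.le
  have e0 : (v 0 / 2) ^ 2 = v 0 ^ 2 / 4 := by ring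
  have e1 : (v 1 / 2) ^ 2 = v 1 ^ 2 / 4 := by ring
  clear_value v
  rw [e0, e1]
  have key : -(2 * Real.pi * c) * (v 0 ^ 2 / 4 + v 1 ^ 2 / 4)
      = -(Real.pi * (c * (v 0 ^ 2 + v 1 ^ 2))) / 2 := by ring
  rw [key]
  have expand : Real.pi * ((τ 0 0).im * v 0 ^ 2 + ((τ 0 1).im + (τ 1 0).im) * v 0 * v 1 + (τ 1 1).im * v 1 ^ 2) / 2
      = Real.pi * (((τ 0 0).im * v 0 ^ 2 + ((τ 0 1).im + (τ 1 0).im) * v 0 * v 1 + (τ 1 1).im * v 1 ^ 2) / 2) := by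
    ring
  linarith [expand]

lemma summable_norm_theta {c : ℝ} (hcpos : 0 < c)
    (hc : ∀ x y : ℝ, c * (x ^ 2 + y ^ 2) ≤
      (τ 0 0).im * x ^ 2 + ((τ 0 1).im + (τ 1 0).im) * x * y + (τ 1 1).im * y ^ 2)
    (a b : Fin 2 → Fin 2) :
    Summable fun n : Fin 2 → ℤ => ‖thetaTerm (a, b) 0 τ n‖ :=
  (gauss2 (mul_pos Real.pi_pos hcpos) (((a 0).val : ℝ) / 2) (((a 1).val : ℝ) / 2)).of_nonneg_of_le
    (fun n => norm_nonneg _) (fun n => norm_thetaTerm_le hc a b n)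

lemma summable_norm_e2 {c : ℝ} (hcpos : 0 < c)
    (hc : ∀ x y : ℝ, c * (x ^ 2 + y ^ 2) ≤
      (τ 0 0).im * x ^ 2 + ((τ 0 1).im + (τ 1 0).im) * x * y + (τ 1 1).im * y ^ 2)
    (ε : Fin 2 → Fin 2) :
    Summable fun r : Fin 2 → ℤ => ‖e2 τ ε r‖ :=
  (gauss2 (by positivity : (0:ℝ) < 2 * Real.pi * c) (((ε 0).val : ℝ) / 2)
      (((ε 1).val : ℝ) / 2)).of_nonneg_of_le
    (fun n => norm_nonneg _) (fun n => norm_e2_le hc ε n)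

/-- forward map of the reindexing bijection -/
def fwd (a : Fin 2 → Fin 2) :
    (Fin 2 × Fin 2) × (Fin 2 → ℤ) × (Fin 2 → ℤ) → (Fin 2 → ℤ) × (Fin 2 → ℤ) :=
  fun x =>
    (fun i => x.2.1 i + x.2.2 i + ((![x.1.1, x.1.2] i).val : ℤ) * (1 - ((a i).val : ℤ)),
     fun i => x.2.1 i - x.2.2 i + (((![x.1.1, x.1.2] i).val : ℤ) - 1) * ((a i).val : ℤ))

lemma fwd_bijective (a : Fin 2 → Fin 2) : Function.Bijective (fwd a) := by
  constructor
  · rintro ⟨⟨c, d⟩, r, s⟩ ⟨⟨c', d'⟩, r', s'⟩ h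
    simp only [fwd, Prod.mk.injEq] at h
    obtain ⟨hm, hn⟩ := h
    have hm0 := congrFun hm 0
    have hm1 := congrFun hm 1
    have hn0 := congrFun hn 0
    have hn1 := congrFun hn 1
    simp only [Matrix.cons_val_zero, Matrix.cons_val_one, Matrix.head_cons] at hm0 hm1 hn0 hn1
    have hc := c.isLt; have hd := d.isLt; have hc' := c'.isLt; have hd' := d'.isLt
    obtain ha0 | ha0 : (a 0).val = 0 ∨ (a 0).val = 1 := by omega
    all_goals obtain ha1 | ha1 : (a 1).val = 0 ∨ (a 1).val = 1 := by omega
    all_goals rw [ha0] at hm0 hn0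
    all_goals rw [ha1] at hm1 hn1
    all_goals push_cast at hm0 hm1 hn0 hn1
    all_goals norm_num at hm0 hm1 hn0 hn1
    all_goals
      have hc2 : c = c' := by apply Fin.ext; omega
      have hd2 : d = d' := by apply Fin.ext; omega
      have hr : r = r' := by
        apply funext; rw [Fin.forall_fin_two]; constructor <;> omega
      have hs : s = s' := by
        apply funext; rw [Fin.forall_fin_two]; constructor <;> omega
      rw [hc2, hd2, hr, hs]
  · rintro ⟨m, n⟩
    have key : ∀ i : Fin 2, ∃ (e : Fin 2) (ri si : ℤ),
        ri + si + (e.val : ℤ) * (1 - ((a i).val : ℤ)) = m i ∧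
        ri - si + ((e.val : ℤ) - 1) * ((a i).val : ℤ) = n i := by
      intro i
      have ha := (a i).isLt
      obtain he | he : (m i + n i + (a i).val) % 2 = 0 ∨ (m i + n i + (a i).val) % 2 = 1 := by
        omega
      · refine ⟨0, (m i + n i + (a i).val) / 2,
          (m i - n i - (a i).val) / 2, ?_, ?_⟩ <;> · simp; omega
      · refine ⟨1, (m i + n i + (a i).val - 1) / 2,
          (m i - n i - 1 - (a i).val + 2 * (a i).val) / 2, ?_, ?_⟩ <;> · simp; omega
    obtain ⟨e0, r0, s0, h00, h01⟩ := key 0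
    obtain ⟨e1, r1, s1, h10, h11⟩ := key 1
    refine ⟨⟨⟨e0, e1⟩, ![r0, r1], ![s0, s1]⟩, ?_⟩
    refine Prod.ext (funext ?_) (funext ?_) <;> rw [Fin.forall_fin_two] <;>
      constructor <;>
      simp only [fwd, Matrix.cons_val_zero, Matrix.cons_val_one, Matrix.head_cons] <;>
      assumption

lemma valadd (x y : Fin 2) :
    (((x + y).val : ℕ) : ℂ) = (x.val : ℂ) + (y.val : ℂ) - 2 * ((x.val : ℂ) * (y.val : ℂ)) := by
  have h : (x + y).val = (x.val + y.val) % 2 := Fin.val_add x y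
  rw [h]
  fin_cases x <;> fin_cases y <;> norm_num

lemma exp_eq_of_sub_int (x y : ℂ) (k : ℤ) (h : x = y + (k : ℂ) * (2 * (Real.pi : ℂ) * I)) :
    Complex.exp x = Complex.exp y := by
  rw [h, Complex.exp_add, Complex.exp_int_mul_two_pi_mul_I, mul_one]

lemma term_eq (τ : Matrix (Fin 2) (Fin 2) ℂ) (a b : Fin 2 → Fin 2) (c d : Fin 2)
    (r s : Fin 2 → ℤ) :
    thetaTerm (a, b) 0 τ (fwd a ((c, d), r, s)).1 *
        thetaTerm (a, b) 0 τ (fwd a ((c, d), r, s)).2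
      = (-1 : ℂ) ^ (c.val * (b 0).val + d.val * (b 1).val) *
          e2 τ ![c, d] r * e2 τ ![c + a 0, d + a 1] s := by
  have hsign : (-1 : ℂ) ^ (c.val * (b 0).val + d.val * (b 1).val)
      = Complex.exp (((c.val * (b 0).val + d.val * (b 1).val : ℕ) : ℂ) * ((Real.pi : ℂ) * I)) := by
    rw [Complex.exp_nat_mul, Complex.exp_pi_mul_I]
  rw [thetaTerm, thetaTerm, ← Complex.exp_add, e2, e2, hsign, ← Complex.exp_add,
    ← Complex.exp_add]
  apply exp_eq_of_sub_int _ _ (r 0 * (b 0).val + r 1 * (b 1).val)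
  simp only [fwd, thetaVec, Fin.sum_univ_two, Matrix.cons_val_zero, Matrix.cons_val_one,
    Matrix.head_cons, Pi.zero_apply, zero_add]
  rw [valadd c (a 0), valadd d (a 1)]
  push_cast
  ring

set_option maxHeartbeats 400000 in
lemma key {τ : Matrix (Fin 2) (Fin 2) ℂ} (hτ : τ ∈ SiegelHalf 2) (a b : Fin 2 → Fin 2) :
    Thetanull (a, b) τ ^ 2 = ∑ c : Fin 2, ∑ d : Fin 2,
      (-1 : ℂ) ^ (c.val * (b 0).val + d.val * (b 1).val) * F τ c d * F τ (c + a 0) (d + a 1) := by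
  obtain ⟨κ, hκ, hq⟩ := posdef_bound hτ
  have hsn : Summable fun n : Fin 2 → ℤ => ‖thetaTerm (a, b) 0 τ n‖ :=
    summable_norm_theta hκ hq a b
  have hse : ∀ ε : Fin 2 → Fin 2, Summable fun r : Fin 2 → ℤ => ‖e2 τ ε r‖ :=
    fun ε => summable_norm_e2 hκ hq ε
  set e : ((Fin 2 × Fin 2) × (Fin 2 → ℤ) × (Fin 2 → ℤ)) ≃ ((Fin 2 → ℤ) × (Fin 2 → ℤ)) :=
    Equiv.ofBijective (fwd a) (fwd_bijective a) with he
  have hprod : Summable fun p : (Fin 2 → ℤ) × (Fin 2 → ℤ) =>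
      thetaTerm (a, b) 0 τ p.1 * thetaTerm (a, b) 0 τ p.2 := (hsn.mul_norm hsn).of_norm
  unfold Thetanull Theta
  rw [sq, tsum_mul_tsum_of_summable_norm hsn hsn]
  rw [← Equiv.tsum_eq e (fun p => thetaTerm (a, b) 0 τ p.1 * thetaTerm (a, b) 0 τ p.2)]
  have hterm : ∀ x : (Fin 2 × Fin 2) × (Fin 2 → ℤ) × (Fin 2 → ℤ),
      thetaTerm (a, b) 0 τ (e x).1 * thetaTerm (a, b) 0 τ (e x).2
      = (-1 : ℂ) ^ ((x.1.1).val * (b 0).val + (x.1.2).val * (b 1).val) *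
          e2 τ ![x.1.1, x.1.2] x.2.1 * e2 τ ![x.1.1 + a 0, x.1.2 + a 1] x.2.2 := by
    rintro ⟨⟨c, d⟩, r, s⟩
    rw [he]
    simp only [Equiv.ofBijective_apply]
    exact term_eq τ a b c d r s
  rw [tsum_congr hterm]
  clear_value e
  have hG : Summable fun x : (Fin 2 × Fin 2) × (Fin 2 → ℤ) × (Fin 2 → ℤ) =>
      (-1 : ℂ) ^ ((x.1.1).val * (b 0).val + (x.1.2).val * (b 1).val) *
        e2 τ ![x.1.1, x.1.2] x.2.1 * e2 τ ![x.1.1 + a 0, x.1.2 + a 1] x.2.2 := by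
    exact (hprod.comp_injective (fwd_bijective a).injective).congr
      (fun x => by rw [← hterm x, he]; rfl)
  have hslice : ∀ cd : Fin 2 × Fin 2, Summable fun rs : (Fin 2 → ℤ) × (Fin 2 → ℤ) =>
      (-1 : ℂ) ^ ((cd.1).val * (b 0).val + (cd.2).val * (b 1).val) *
        e2 τ ![cd.1, cd.2] rs.1 * e2 τ ![cd.1 + a 0, cd.2 + a 1] rs.2 :=
    fun cd => by
      have hs2 := (((hse ![cd.1, cd.2]).mul_norm (hse ![cd.1 + a 0, cd.2 + a 1])).of_norm).mul_left
        ((-1 : ℂ) ^ ((cd.1).val * (b 0).val + (cd.2).val * (b 1).val))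
      exact hs2.congr (fun rs => by simp only [mul_assoc])
  rw [Summable.tsum_prod' hG (fun cd => hslice cd), tsum_fintype, Fintype.sum_prod_type]
  refine Finset.sum_congr rfl (fun c _ => Finset.sum_congr rfl (fun d _ => ?_))
  have step1 : ∀ rs : (Fin 2 → ℤ) × (Fin 2 → ℤ),
      (-1 : ℂ) ^ (c.val * (b 0).val + d.val * (b 1).val) *
        e2 τ ![c, d] rs.1 * e2 τ ![c + a 0, d + a 1] rs.2
      = (-1 : ℂ) ^ (c.val * (b 0).val + d.val * (b 1).val) *
        (e2 τ ![c, d] rs.1 * e2 τ ![c + a 0, d + a 1] rs.2) := fun rs => by ring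
  rw [tsum_congr step1, tsum_mul_left, ← tsum_mul_tsum_of_summable_norm (hse _) (hse _)]
  simp only [F]
  ring
end G2R

open G2R in

/-- the three quadratic Riemann relations among the genus-2
thetanulls. -/


theorem genus2_riemann_relations_squares (τ : Matrix (Fin 2) (Fin 2) ℂ)
    (hτ : τ ∈ SiegelHalf 2) :
    Thetanull (char2 0 0) τ ^ 2 * Thetanull (char2 0 1) τ ^ 2
        - Thetanull (char2 0 2) τ ^ 2 * Thetanull (char2 0 3) τ ^ 2
      = Thetanull (char2 2 0) τ ^ 2 * Thetanull (char2 2 1) τ ^ 2 ∧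
    Thetanull (char2 0 0) τ ^ 2 * Thetanull (char2 0 2) τ ^ 2
        - Thetanull (char2 0 1) τ ^ 2 * Thetanull (char2 0 3) τ ^ 2
      = Thetanull (char2 1 0) τ ^ 2 * Thetanull (char2 1 2) τ ^ 2 ∧
    Thetanull (char2 0 0) τ ^ 2 * Thetanull (char2 0 3) τ ^ 2
        - Thetanull (char2 0 1) τ ^ 2 * Thetanull (char2 0 2) τ ^ 2
      = Thetanull (char2 3 0) τ ^ 2 * Thetanull (char2 3 3) τ ^ 2 := by
  have h1 := G2R.key hτ (digitChar 0) (digitChar 0)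
  have h2 := G2R.key hτ (digitChar 0) (digitChar 1)
  have h3 := G2R.key hτ (digitChar 0) (digitChar 2)
  have h4 := G2R.key hτ (digitChar 0) (digitChar 3)
  have h5 := G2R.key hτ (digitChar 2) (digitChar 0)
  have h6 := G2R.key hτ (digitChar 2) (digitChar 1)
  have h7 := G2R.key hτ (digitChar 1) (digitChar 0)
  have h8 := G2R.key hτ (digitChar 1) (digitChar 2)
  have h9 := G2R.key hτ (digitChar 3) (digitChar 0)
  have h10 := G2R.key hτ (digitChar 3) (digitChar 3)
  simp only [digitChar, Fin.sum_univ_two, Matrix.cons_val_zero, Matrix.cons_val_one,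
    Matrix.head_cons, Fin.val_zero, Fin.val_one, Fin.isValue, mul_zero, zero_mul, mul_one,
    one_mul, add_zero, zero_add, pow_zero, pow_one,
    show (0 + 1 : Fin 2) = 1 from rfl, show (1 + 1 : Fin 2) = 0 from rfl,
    show ((0 : Fin 2) + 0 : Fin 2) = 0 from rfl, show (1 + 0 : Fin 2) = 1 from rfl]
    at h1 h2 h3 h4 h5 h6 h7 h8 h9 h10
  simp only [char2, digitChar]
  refine ⟨?_, ?_, ?_⟩ <;> rw [h1] <;>
    first
    | (rw [h2, h3, h4, h5, h6]; ring)
    | (rw [h2, h3, h4, h7, h8]; ring)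
    | (rw [h2, h3, h4, h9, h10]; ring)
end
end

section
/- For every τ ∈ ℌ₂, the genus-2 thetanulls satisfy: θ_{00}(τ)⁴ − θ_{01}(τ)⁴ = θ_{10}(τ)⁴ + θ_{33}(τ)⁴, θ_{00}(τ)⁴ − θ_{02}(τ)⁴ = θ_{21}(τ)⁴ + θ_{30}(τ)⁴, and θ_{00}(τ)⁴ − θ_{03}(τ)⁴ = θ_{12}(τ)⁴ + θ_{20}(τ)⁴. -/
open Complex BigOperators Finset

noncomputable section

namespace RQproof

lemma gauss_nat_summable {b : ℝ} (hb : 0 < b) : Summable fun n : ℕ => Real.exp (-(b * (n:ℝ)^2)) := by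
  have h := summable_geometric_of_lt_one (r := Real.exp (-b)) (Real.exp_nonneg _)
    (Real.exp_lt_one_iff.mpr (by linarith))
  refine h.of_nonneg_of_le (fun n => (Real.exp_pos _).le) (fun n => ?_)
  rw [← Real.exp_nat_mul]
  apply Real.exp_le_exp.mpr
  have : (n : ℝ) ≤ (n:ℝ)^2 := by exact_mod_cast Nat.le_self_pow two_ne_zero n
  nlinarith

lemma gauss_int_summable {b : ℝ} (hb : 0 < b) : Summable fun k : ℤ => Real.exp (-(b * (k:ℝ)^2)) := by
  apply Summable.of_nat_of_neg <;> simpa using gauss_nat_summable hb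

lemma gauss_shift_summable {c : ℝ} (hc : 0 < c) (e : ℝ) :
    Summable fun k : ℤ => Real.exp (-(c * ((k:ℝ)+e)^2)) := by
  have h := (gauss_int_summable (b := c/2) (by linarith)).mul_left (Real.exp (c * e^2))
  refine h.of_nonneg_of_le (fun k => (Real.exp_pos _).le) (fun k => ?_)
  rw [← Real.exp_add]
  apply Real.exp_le_exp.mpr
  nlinarith [sq_nonneg ((k:ℝ) + 2*e)]


/-- The real vector `n + a′/2`. -/
def xr {g : ℕ} (a : ThetaChar g) (n : Fin g → ℤ) (i : Fin g) : ℝ :=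
  (n i : ℝ) + ((a.1 i).val : ℝ) / 2

lemma thetaVec_eq_ofReal {g : ℕ} (a : ThetaChar g) (n : Fin g → ℤ) (i : Fin g) :
    thetaVec a n i = ((xr a n i : ℝ) : ℂ) := by
  simp [thetaVec, xr]

lemma norm_thetaTerm {g : ℕ} (a : ThetaChar g) (τ : Matrix (Fin g) (Fin g) ℂ)
    (n : Fin g → ℤ) :
    ‖thetaTerm a 0 τ n‖ =
      Real.exp (-(Real.pi * ∑ i, ∑ j, xr a n i * xr a n j * (τ i j).im)) := by
  rw [thetaTerm, Complex.norm_exp]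
  congr 1
  have hQ : (∑ i, ∑ j, thetaVec a n i * τ i j * thetaVec a n j).im
      = ∑ i, ∑ j, xr a n i * xr a n j * (τ i j).im := by
    rw [Complex.im_sum]
    refine Finset.sum_congr rfl fun i _ => ?_
    rw [Complex.im_sum]
    refine Finset.sum_congr rfl fun j _ => ?_
    rw [thetaVec_eq_ofReal, thetaVec_eq_ofReal]
    simp [Complex.mul_im]
    ring
  have hL : (∑ i, thetaVec a n i * ((0 : Fin g → ℂ) i + ((a.2 i).val : ℂ) / 2)).im = 0 := by
    rw [Complex.im_sum]
    refine Finset.sum_eq_zero fun i _ => ?_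
    rw [thetaVec_eq_ofReal]
    simp [Complex.mul_im]
  have h2 : (2:ℂ).im = 0 := by norm_num
  have h2' : (2:ℂ).re = 2 := by norm_num
  simp only [Complex.add_re, Complex.mul_re, Complex.mul_im, Complex.I_re, Complex.I_im,
    Complex.ofReal_re, Complex.ofReal_im, h2, h2', hQ, hL]
  ring

lemma quad_lower (τ : Matrix (Fin 2) (Fin 2) ℂ) (hτ : τ ∈ SiegelHalf 2) :
    ∃ c : ℝ, 0 < c ∧ ∀ x : Fin 2 → ℝ,
      c * ((x 0)^2 + (x 1)^2) ≤ ∑ i, ∑ j, x i * x j * (τ i j).im := by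
  obtain ⟨hsym, hpos⟩ := hτ
  have hBA : (τ 1 0).im = (τ 0 1).im := congrArg Complex.im (hsym.apply 0 1)
  have hA : 0 < (τ 0 0).im := by
    have h := hpos.dotProduct_mulVec_pos (x := ![1,0]) (by intro h; simpa using congrFun h 0)
    simpa [Matrix.mulVec, dotProduct, Fin.sum_univ_two] using h
  have hG : 0 < (τ 1 1).im := by
    have h := hpos.dotProduct_mulVec_pos (x := ![0,1]) (by intro h; simpa using congrFun h 1)
    simpa [Matrix.mulVec, dotProduct, Fin.sum_univ_two] using h
  have hdet : 0 < (τ 0 0).im * (τ 1 1).im - (τ 0 1).im^2 := by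
    have h := hpos.det_pos
    rw [Matrix.det_fin_two] at h
    simp only [Matrix.of_apply] at h
    rw [hBA] at h
    nlinarith [h]
  set A := (τ 0 0).im; set B := (τ 0 1).im; set G := (τ 1 1).im
  refine ⟨(A*G - B^2)/(2*(A+G)), by positivity, fun x => ?_⟩
  rw [Fin.sum_univ_two, Fin.sum_univ_two, Fin.sum_univ_two, hBA]
  rw [div_mul_eq_mul_div, div_le_iff₀ (by linarith)]
  nlinarith [sq_nonneg (A*(x 0) + B*(x 1)), sq_nonneg (G*(x 1) + B*(x 0)),
    sq_nonneg (x 0), sq_nonneg (x 1), mul_pos hA hG]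

lemma summable_norm_thetaTerm (a : ThetaChar 2) (τ : Matrix (Fin 2) (Fin 2) ℂ)
    (hτ : τ ∈ SiegelHalf 2) :
    Summable fun n : Fin 2 → ℤ => ‖thetaTerm a 0 τ n‖ := by
  obtain ⟨c, hc, hbound⟩ := quad_lower τ hτ
  set e0 := ((a.1 0).val : ℝ)/2 with he0
  set e1 := ((a.1 1).val : ℝ)/2 with he1
  have hpc : 0 < Real.pi * c := mul_pos Real.pi_pos hc
  have hsum : Summable fun k : ℤ × ℤ =>
      Real.exp (-(Real.pi * c * ((k.1:ℝ)+e0)^2)) * Real.exp (-(Real.pi * c * ((k.2:ℝ)+e1)^2)) :=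
    (gauss_shift_summable hpc e0).mul_of_nonneg (gauss_shift_summable hpc e1)
      (fun _ => (Real.exp_pos _).le) (fun _ => (Real.exp_pos _).le)
  have hsum2 := (Equiv.summable_iff (finTwoArrowEquiv ℤ)).mpr hsum
  refine hsum2.of_nonneg_of_le (fun n => norm_nonneg _) (fun n => ?_)
  rw [norm_thetaTerm]
  show _ ≤ Real.exp (-(Real.pi * c * ((n 0 : ℝ)+e0)^2)) * Real.exp (-(Real.pi * c * ((n 1:ℝ)+e1)^2))
  rw [← Real.exp_add]
  apply Real.exp_le_exp.mpr
  have hb := hbound (xr a n)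
  have hx0 : xr a n 0 = (n 0 : ℝ) + e0 := rfl
  have hx1 : xr a n 1 = (n 1 : ℝ) + e1 := rfl
  rw [hx0, hx1] at hb
  nlinarith [mul_le_mul_of_nonneg_left hb Real.pi_pos.le]

lemma summable_thetaTerm (a : ThetaChar 2) (τ : Matrix (Fin 2) (Fin 2) ℂ)
    (hτ : τ ∈ SiegelHalf 2) : Summable (thetaTerm a 0 τ) :=
  (summable_norm_thetaTerm a τ hτ).of_norm

lemma smul_mem_siegel (τ : Matrix (Fin 2) (Fin 2) ℂ) (hτ : τ ∈ SiegelHalf 2) :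
    (2:ℂ) • τ ∈ SiegelHalf 2 := by
  obtain ⟨hsym, hpos⟩ := hτ
  constructor
  · have : Matrix.transpose ((2:ℂ) • τ) = (2:ℂ) • τ := by
      rw [Matrix.transpose_smul, hsym]
    exact this
  · rw [Matrix.posDef_iff_dotProduct_mulVec]
    constructor
    · have h1 := hpos.1
      ext i j
      have := congrFun (congrFun h1 i) j
      simp only [Matrix.conjTranspose_apply, Matrix.of_apply, star_trivial] at this ⊢
      simp [Matrix.smul_apply, smul_eq_mul, Complex.mul_im]
      linarith [this]
    · intro x hx
      have h := hpos.dotProduct_mulVec_pos hx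
      simp only [Matrix.mulVec, dotProduct, Fin.sum_univ_two, Matrix.of_apply,
        star_trivial, Pi.star_apply, Matrix.smul_apply, smul_eq_mul] at h ⊢
      have h2 : ∀ i j : Fin 2, ((2:ℂ) * τ i j).im = 2 * (τ i j).im := by
        intro i j; simp [Complex.mul_im]
      rw [h2, h2, h2, h2]
      nlinarith [h]

lemma fin2_cases (x : Fin 2) : x = 0 ∨ x = 1 := by
  rcases x with ⟨v, hv⟩
  interval_cases v
  · left; rfl
  · right; rfl

/-- The reindexing `(σ, p, q) ↦ (m, n) = (p + q + σ(1-b), p - q - (1-σ)b)`. -/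
def bigEquiv (b : Fin 2 → Fin 2) :
    ((Fin 2 → Fin 2) × ((Fin 2 → ℤ) × (Fin 2 → ℤ))) ≃ ((Fin 2 → ℤ) × (Fin 2 → ℤ)) where
  toFun x := (fun i => x.2.1 i + x.2.2 i + ((x.1 i).val : ℤ) * (1 - ((b i).val : ℤ)),
              fun i => x.2.1 i - x.2.2 i - (1 - ((x.1 i).val : ℤ)) * ((b i).val : ℤ))
  invFun y :=
    (fun i => if (y.1 i + y.2 i + ((b i).val : ℤ)) % 2 = 0 then 0 else 1,
     fun i => (y.1 i + y.2 i + ((b i).val:ℤ) - ((y.1 i + y.2 i + ((b i).val:ℤ)) % 2)) / 2,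
     fun i => (y.1 i - y.2 i - ((y.1 i + y.2 i + ((b i).val:ℤ)) % 2) * (1 - ((b i).val:ℤ))
               - (1 - ((y.1 i + y.2 i + ((b i).val:ℤ)) % 2)) * ((b i).val:ℤ)) / 2)
  left_inv := by
    rintro ⟨σ, p, q⟩
    dsimp only
    refine Prod.ext (funext fun i => ?_) (Prod.ext (funext fun i => ?_) (funext fun i => ?_)) <;>
      dsimp only <;>
      rcases fin2_cases (σ i) with hσ | hσ <;> rcases fin2_cases (b i) with hb | hb <;>
      simp only [hσ, hb] <;>
      simp only [Fin.val_zero, Fin.val_one, Nat.cast_zero, Nat.cast_one]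
    case _ =>
      split_ifs with h
      · rfl
      · exact absurd (by omega) h
    case _ =>
      split_ifs with h
      · rfl
      · exact absurd (by omega) h
    case _ =>
      split_ifs with h
      · exact absurd h (by omega)
      · rfl
    case _ =>
      split_ifs with h
      · exact absurd h (by omega)
      · rfl
    all_goals omega
  right_inv := by
    rintro ⟨m, n⟩
    dsimp only
    refine Prod.ext (funext fun i => ?_) (funext fun i => ?_) <;>
      dsimp only <;>
      rcases fin2_cases (b i) with hb | hb <;>
      rw [hb] <;>
      simp only [Fin.val_zero, Fin.val_one, Nat.cast_zero, Nat.cast_one] <;>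
      split_ifs with h <;>
      simp only [Fin.val_zero, Fin.val_one, Nat.cast_zero, Nat.cast_one] <;>
      omega

lemma val_add_fin2 (x y : Fin 2) :
    (((x + y).val : ℤ)) = (x.val : ℤ) + (y.val : ℤ) - 2 * ((x.val : ℤ) * (y.val : ℤ)) := by
  rcases fin2_cases x with h|h <;> rcases fin2_cases y with h'|h' <;> subst h h' <;> decide

lemma val_add_fin2_c (x y : Fin 2) :
    ((((x + y).val : ℕ)) : ℂ) =
      ((x.val : ℕ) : ℂ) + ((y.val : ℕ) : ℂ) - 2 * (((x.val : ℕ) : ℂ) * ((y.val : ℕ) : ℂ)) := by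
  exact_mod_cast val_add_fin2 x y

lemma exp_aux (A B : ℂ) (S : ℕ) (P : ℤ)
    (h : A = B + (S : ℂ) * ((Real.pi : ℂ) * Complex.I)
        + (P : ℂ) * (2 * (Real.pi : ℂ) * Complex.I)) :
    Complex.exp A = (-1 : ℂ) ^ S * Complex.exp B := by
  rw [h, Complex.exp_add, Complex.exp_add, Complex.exp_nat_mul, Complex.exp_pi_mul_I,
    Complex.exp_int_mul_two_pi_mul_I]
  ring

lemma term_mul (a : ThetaChar 2) (τ : Matrix (Fin 2) (Fin 2) ℂ) (σ : Fin 2 → Fin 2)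
    (p q : Fin 2 → ℤ) :
    thetaTerm a 0 τ (fun i => p i + q i + ((σ i).val : ℤ) * (1 - ((a.1 i).val : ℤ)))
      * thetaTerm a 0 τ (fun i => p i - q i - (1 - ((σ i).val : ℤ)) * ((a.1 i).val : ℤ))
    = (-1 : ℂ) ^ (∑ i, (σ i).val * (a.2 i).val)
      * (thetaTerm (σ, 0) 0 ((2:ℂ) • τ) p
          * thetaTerm ((σ + a.1 : Fin 2 → Fin 2), 0) 0 ((2:ℂ) • τ) q) := by
  rw [thetaTerm, thetaTerm, thetaTerm, thetaTerm, ← Complex.exp_add, ← Complex.exp_add]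
  apply exp_aux _ _ _ (∑ i, p i * ((a.2 i).val : ℤ))
  simp only [thetaVec, Pi.zero_apply, Pi.add_apply, Matrix.smul_apply, smul_eq_mul,
    Fin.sum_univ_two, Fin.isValue, Fin.val_zero, Nat.cast_zero]
  rw [val_add_fin2_c (σ 0) (a.1 0), val_add_fin2_c (σ 1) (a.1 1)]
  push_cast
  ring

lemma theta_sq (a : ThetaChar 2) (τ : Matrix (Fin 2) (Fin 2) ℂ) (hτ : τ ∈ SiegelHalf 2) :
    Thetanull a τ ^ 2 = ∑ σ : Fin 2 → Fin 2,
      (-1:ℂ) ^ (∑ i, (σ i).val * (a.2 i).val) *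
        (Thetanull (σ, 0) ((2:ℂ) • τ) * Thetanull ((σ + a.1 : Fin 2 → Fin 2), 0) ((2:ℂ) • τ)) := by
  have hτ2 := smul_mem_siegel τ hτ
  have hn := summable_norm_thetaTerm a τ hτ
  rw [Thetanull, Theta, sq, tsum_mul_tsum_of_summable_norm hn hn]
  rw [← Equiv.tsum_eq (bigEquiv a.1) (fun z => thetaTerm a 0 τ z.1 * thetaTerm a 0 τ z.2)]
  have hsum : Summable (fun x : (Fin 2 → Fin 2) × ((Fin 2 → ℤ) × (Fin 2 → ℤ)) =>
      thetaTerm a 0 τ ((bigEquiv a.1) x).1 * thetaTerm a 0 τ ((bigEquiv a.1) x).2) :=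
    ((bigEquiv a.1).summable_iff).mpr (summable_mul_of_summable_norm hn hn)
  rw [Summable.tsum_prod' hsum (fun σ => hsum.prod_factor σ), tsum_fintype]
  refine Finset.sum_congr rfl fun σ _ => ?_
  have h1 := summable_norm_thetaTerm (σ, 0) ((2:ℂ) • τ) hτ2
  have h2 := summable_norm_thetaTerm ((σ + a.1 : Fin 2 → Fin 2), 0) ((2:ℂ) • τ) hτ2
  have hterm : ∀ z : (Fin 2 → ℤ) × (Fin 2 → ℤ),
      thetaTerm a 0 τ ((bigEquiv a.1) (σ, z)).1 * thetaTerm a 0 τ ((bigEquiv a.1) (σ, z)).2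
      = (-1:ℂ) ^ (∑ i, (σ i).val * (a.2 i).val) *
        (thetaTerm (σ, 0) 0 ((2:ℂ) • τ) z.1
          * thetaTerm ((σ + a.1 : Fin 2 → Fin 2), 0) 0 ((2:ℂ) • τ) z.2) :=
    fun z => term_mul a τ σ z.1 z.2
  rw [tsum_congr hterm, tsum_mul_left, ← tsum_mul_tsum_of_summable_norm h1 h2]
  rw [Thetanull, Thetanull, Theta, Theta]

lemma vec_eta (x : Fin 2 → Fin 2) : ![x 0, x 1] = x := by
  funext i; fin_cases i <;> rfl

lemma sum4 (h : (Fin 2 → Fin 2) → ℂ) :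
    ∑ σ : Fin 2 → Fin 2, h σ = h ![0,0] + h ![0,1] + h ![1,0] + h ![1,1] := by
  rw [Fintype.sum_equiv (finTwoArrowEquiv (Fin 2)) h (fun y => h ![y.1, y.2])
    (fun x => (congrArg h (vec_eta x)).symm)]
  rw [Fintype.sum_prod_type, Fin.sum_univ_two, Fin.sum_univ_two, Fin.sum_univ_two]
  ring

lemma vecadd (x y z w : Fin 2) : ![x, y] + ![z, w] = ![x + z, y + w] := by
  funext i; fin_cases i <;> rfl

end RQproof

/-- the three quartic Riemann relations among the genus-2
thetanulls. -/
theorem genus2_riemann_relations_fourth (τ : Matrix (Fin 2) (Fin 2) ℂ)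
    (hτ : τ ∈ SiegelHalf 2) :
    Thetanull (char2 0 0) τ ^ 4 - Thetanull (char2 0 1) τ ^ 4
      = Thetanull (char2 1 0) τ ^ 4 + Thetanull (char2 3 3) τ ^ 4 ∧
    Thetanull (char2 0 0) τ ^ 4 - Thetanull (char2 0 2) τ ^ 4
      = Thetanull (char2 2 1) τ ^ 4 + Thetanull (char2 3 0) τ ^ 4 ∧
    Thetanull (char2 0 0) τ ^ 4 - Thetanull (char2 0 3) τ ^ 4
      = Thetanull (char2 1 2) τ ^ 4 + Thetanull (char2 2 0) τ ^ 4 := by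
  have e00 := RQproof.theta_sq (char2 0 0) τ hτ
  have e01 := RQproof.theta_sq (char2 0 1) τ hτ
  have e02 := RQproof.theta_sq (char2 0 2) τ hτ
  have e03 := RQproof.theta_sq (char2 0 3) τ hτ
  have e10 := RQproof.theta_sq (char2 1 0) τ hτ
  have e33 := RQproof.theta_sq (char2 3 3) τ hτ
  have e21 := RQproof.theta_sq (char2 2 1) τ hτ
  have e30 := RQproof.theta_sq (char2 3 0) τ hτ
  have e12 := RQproof.theta_sq (char2 1 2) τ hτ
  have e20 := RQproof.theta_sq (char2 2 0) τ hτ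
  rw [RQproof.sum4] at e00 e01 e02 e03 e10 e33 e21 e30 e12 e20
  simp only [char2, digitChar] at e00 e01 e02 e03 e10 e33 e21 e30 e12 e20 ⊢
  simp only [RQproof.vecadd, Matrix.cons_val_zero, Matrix.cons_val_one, Matrix.head_cons,
    Fin.sum_univ_two, Fin.val_zero, Fin.val_one,
    (show ((0:Fin 2) + 0) = 0 from rfl), (show ((0:Fin 2) + 1) = 1 from rfl),
    (show ((1:Fin 2) + 0) = 1 from rfl), (show ((1:Fin 2) + 1) = 0 from rfl)]
    at e00 e01 e02 e03 e10 e33 e21 e30 e12 e20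
  norm_num at e00 e01 e02 e03 e10 e33 e21 e30 e12 e20
  refine ⟨?_, ?_, ?_⟩ <;>
    simp only [(show (4:ℕ) = 2*2 from rfl), pow_mul]
  · rw [e00, e01, e10, e33]; ring
  · rw [e00, e02, e21, e30]; ring
  · rw [e00, e03, e12, e20]; ring
end
end
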